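/- arXiv:2109.11805 — 5 statements merged into one kernel-verified Lean document; each statement's English description precedes it below -/
import Mathlib

section
/- Let S = k[α_1,...,α_n] act on P = k[x_1,...,x_n] by letting α_i act as the partial derivative ∂/∂x_i. Suppose g ∈ S satisfies g ∘ F = 1 and Q_i ∈ S satisfy Q_i ∘ F = x_i for a cubic F. Define Γ(t) = g(α) + t·Σ_i β_i·Q_i(α) + t²·Σ_i α_i·Q_i(β) + t³·g(β) in k[t, α, β], where β_j acts as ∂/∂y_j on k[t, x, y]. Then Γ(t) ∘ (F(x)·F(y)) = F(t·x + y). -/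
open MvPolynomial

/-- Composition of powers of the operators `op i`, with multiplicities given by `m`. -/
noncomputable def opPow {k : Type*} [CommSemiring k] {σ : Type*}
    (op : σ → Module.End k (MvPolynomial σ k)) (m : σ →₀ ℕ) :
    Module.End k (MvPolynomial σ k) :=
  m.support.toList.foldr (fun i L => (op i) ^ (m i) * L) 1

/-- The action of a "differential polynomial" `h` on `F`, each variable of `h` acting by the
operator `op i`. -/
noncomputable def apAct {k : Type*} [CommSemiring k] {σ : Type*}
    (op : σ → Module.End k (MvPolynomial σ k)) (h F : MvPolynomial σ k) : MvPolynomial σ k :=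
  h.support.sum fun m => (h.coeff m) • (opPow op m F)

/-- Apolarity contraction `h ∘ F`: each variable of `h` acts as the corresponding partial
derivative. -/
noncomputable def apContract {k : Type*} [CommSemiring k] {σ : Type*} [DecidableEq σ]
    (h F : MvPolynomial σ k) : MvPolynomial σ k :=
  apAct (fun i => (pderiv i).toLinearMap) h F

/-- The operators for the relative apolarity action on `k[t, z…]` (with `t = X none`):
`t` acts by multiplication and every other variable acts as its partial derivative. -/
noncomputable def tOp {k : Type*} [CommSemiring k] {τ : Type*} [DecidableEq τ] :
    Option τ → Module.End k (MvPolynomial (Option τ) k)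
  | none => LinearMap.mulLeft k (X none)
  | some v => (pderiv (some v)).toLinearMap

/-- Relative apolarity action of `k[t, α…]` on `k[t, x…]`: `t` acts by multiplication, and the
variable `some v` acts as `∂/∂(X (some v))`. -/
noncomputable def tAct {k : Type*} [CommSemiring k] {τ : Type*} [DecidableEq τ]
    (h F : MvPolynomial (Option τ) k) : MvPolynomial (Option τ) k :=
  apAct tOp h F

/-! ### Generic machinery for `apAct` with commuting operators -/

section Machinery
variable {k : Type*} [CommSemiring k] {σ : Type*}
  (op : σ → Module.End k (MvPolynomial σ k))

lemma opPow_eq (m : σ →₀ ℕ) :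
    opPow op m = (m.support.toList.map fun i => op i ^ m i).prod := by
  rw [opPow, List.prod_eq_foldr, List.foldr_map]

variable (hcomm : ∀ i j, op i * op j = op j * op i)
include hcomm

/-- `apAct op ·` bundled as an algebra homomorphism into endomorphisms. -/
noncomputable def opHom : MvPolynomial σ k →ₐ[k] Module.End k (MvPolynomial σ k) :=
  letI : CommSemiring (Algebra.adjoin k (Set.range op)) :=
    Algebra.adjoinCommSemiringOfComm k (by
      rintro a ⟨i, rfl⟩ b ⟨j, rfl⟩; exact hcomm i j)
  (Algebra.adjoin k (Set.range op)).val.comp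
    (aeval fun i => (⟨op i, Algebra.subset_adjoin ⟨i, rfl⟩⟩ : Algebra.adjoin k (Set.range op)))

lemma opHom_X (i : σ) : opHom op hcomm (X i) = op i := by
  simp [opHom]

lemma opHom_monomial (m : σ →₀ ℕ) (c : k) :
    opHom op hcomm (monomial m c) = c • opPow op m := by
  letI : CommSemiring (Algebra.adjoin k (Set.range op)) :=
    Algebra.adjoinCommSemiringOfComm k (by
      rintro a ⟨i, rfl⟩ b ⟨j, rfl⟩; exact hcomm i j)
  rw [opHom, AlgHom.comp_apply, aeval_monomial]
  rw [map_mul, AlgHom.commutes]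
  have h1 : (Algebra.adjoin k (Set.range op)).val
      (m.prod fun i e => (⟨op i, Algebra.subset_adjoin ⟨i, rfl⟩⟩ :
        Algebra.adjoin k (Set.range op)) ^ e) = opPow op m := by
    rw [Finsupp.prod, ← Finset.prod_map_toList, map_list_prod, opPow_eq]
    congr 1
    rw [List.map_map]
    rfl
  rw [h1, Algebra.algebraMap_eq_smul_one, smul_mul_assoc, one_mul]

lemma apAct_eq (h F : MvPolynomial σ k) : apAct op h F = opHom op hcomm h F := by
  conv_rhs => rw [← support_sum_monomial_coeff h]
  rw [map_sum]
  rw [apAct, LinearMap.coe_sum, Finset.sum_apply]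
  refine Finset.sum_congr rfl fun m hm => ?_
  rw [opHom_monomial]
  rfl

lemma apAct_mul (h1 h2 F : MvPolynomial σ k) :
    apAct op (h1 * h2) F = apAct op h1 (apAct op h2 F) := by
  simp only [apAct_eq op hcomm, map_mul]; rfl

lemma apAct_add (h1 h2 F : MvPolynomial σ k) :
    apAct op (h1 + h2) F = apAct op h1 F + apAct op h2 F := by
  simp only [apAct_eq op hcomm, map_add]; rfl

lemma apAct_X (i : σ) (F : MvPolynomial σ k) : apAct op (X i) F = op i F := by
  rw [apAct_eq op hcomm, opHom_X]

lemma apAct_C (c : k) (F : MvPolynomial σ k) : apAct op (C c) F = c • F := by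
  rw [apAct_eq op hcomm, ← MvPolynomial.algebraMap_eq, AlgHom.commutes,
    Module.algebraMap_end_apply]

lemma apAct_one (F : MvPolynomial σ k) : apAct op 1 F = F := by
  rw [apAct_eq op hcomm, map_one]; rfl

lemma apAct_sum {ι : Type*} (s : Finset ι) (f : ι → MvPolynomial σ k) (F : MvPolynomial σ k) :
    apAct op (∑ i ∈ s, f i) F = ∑ i ∈ s, apAct op (f i) F := by
  simp only [apAct_eq op hcomm, map_sum, LinearMap.coe_sum, Finset.sum_apply]

end Machinery

/-! ### Commutativity of the operator families -/

section PderivComm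
variable {k : Type*} [CommSemiring k] {σ : Type*} [DecidableEq σ]

lemma pderiv_comm' (i j : σ) (f : MvPolynomial σ k) :
    pderiv i (pderiv j f) = pderiv j (pderiv i f) := by
  induction f using MvPolynomial.induction_on with
  | C c => simp
  | add p q hp hq => simp [hp, hq]
  | mul_X p s hp =>
    simp only [pderiv_mul, map_add, hp, pderiv_mul]
    have h1 : pderiv i (pderiv j (X s) : MvPolynomial σ k) = 0 := by
      rcases eq_or_ne j s with rfl | h
      · simp
      · simp [pderiv_X_of_ne (Ne.symm h)]
    have h2 : pderiv j (pderiv i (X s) : MvPolynomial σ k) = 0 := by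
      rcases eq_or_ne i s with rfl | h
      · simp
      · simp [pderiv_X_of_ne (Ne.symm h)]
    rw [h1, h2]
    ring

lemma pOp_comm (i j : σ) :
    ((pderiv i).toLinearMap : Module.End k (MvPolynomial σ k)) * (pderiv j).toLinearMap
      = (pderiv j).toLinearMap * (pderiv i).toLinearMap :=
  LinearMap.ext fun f => pderiv_comm' i j f

end PderivComm

section TOpComm
variable {k : Type*} [CommSemiring k] {τ : Type*} [DecidableEq τ]

lemma tOp_comm (i j : Option τ) :
    (tOp (k := k) i) * tOp j = tOp j * tOp i := by
  have key : ∀ v : τ, (tOp (k := k) (some v)) * tOp none = tOp none * tOp (some v) := by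
    intro v
    refine LinearMap.ext fun f => ?_
    simp only [tOp, Module.End.mul_apply, LinearMap.mulLeft_apply,
      Derivation.coeFn_coe]
    rw [pderiv_mul, pderiv_X_of_ne (by simp), zero_mul, zero_add]
  match i, j with
  | none, none => rfl
  | none, some v => exact (key v).symm
  | some v, none => exact key v
  | some v, some w => exact pOp_comm _ _

end TOpComm

/-! ### API for `apContract` and `tAct` -/

section ContractAPI
variable {k : Type*} [CommSemiring k] {σ : Type*} [DecidableEq σ]

lemma apContract_mul (h1 h2 F : MvPolynomial σ k) :
    apContract (h1 * h2) F = apContract h1 (apContract h2 F) :=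
  apAct_mul _ pOp_comm h1 h2 F

lemma apContract_add (h1 h2 F : MvPolynomial σ k) :
    apContract (h1 + h2) F = apContract h1 F + apContract h2 F :=
  apAct_add _ pOp_comm h1 h2 F

lemma apContract_X (i : σ) (F : MvPolynomial σ k) : apContract (X i) F = pderiv i F :=
  apAct_X _ pOp_comm i F

lemma apContract_C (c : k) (F : MvPolynomial σ k) : apContract (C c) F = c • F :=
  apAct_C _ pOp_comm c F

end ContractAPI

section TActAPI
variable {k : Type*} [CommSemiring k] {τ : Type*} [DecidableEq τ]

lemma tAct_mul (h1 h2 F : MvPolynomial (Option τ) k) :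
    tAct (h1 * h2) F = tAct h1 (tAct h2 F) :=
  apAct_mul _ tOp_comm h1 h2 F

lemma tAct_add (h1 h2 F : MvPolynomial (Option τ) k) :
    tAct (h1 + h2) F = tAct h1 F + tAct h2 F :=
  apAct_add _ tOp_comm h1 h2 F

lemma tAct_X_none (F : MvPolynomial (Option τ) k) : tAct (X none) F = X none * F :=
  apAct_X _ tOp_comm none F

lemma tAct_X_some (v : τ) (F : MvPolynomial (Option τ) k) :
    tAct (X (some v)) F = pderiv (some v) F :=
  apAct_X _ tOp_comm (some v) F

lemma tAct_C (c : k) (F : MvPolynomial (Option τ) k) : tAct (C c) F = c • F :=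
  apAct_C _ tOp_comm c F

lemma tAct_sum {ι : Type*} (s : Finset ι) (f : ι → MvPolynomial (Option τ) k)
    (F : MvPolynomial (Option τ) k) :
    tAct (∑ i ∈ s, f i) F = ∑ i ∈ s, tAct (f i) F :=
  apAct_sum _ tOp_comm s f F

lemma tAct_pow_none (j : ℕ) (F : MvPolynomial (Option τ) k) :
    tAct ((X none) ^ j) F = (X none) ^ j * F := by
  induction j with
  | zero => simpa [tAct] using apAct_one _ (tOp_comm (k := k) (τ := τ)) F
  | succ j ih => rw [pow_succ', tAct_mul, ih, tAct_X_none]; ring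

lemma tAct_pow_none_mul (j : ℕ) (h F : MvPolynomial (Option τ) k) :
    tAct ((X none) ^ j * h) F = (X none) ^ j * tAct h F := by
  rw [tAct_mul, tAct_pow_none]

end TActAPI

/-! ### Homogeneous polynomials: Euler's identity and derivatives -/

section Homog
variable {k : Type*} [CommSemiring k] {σ : Type*} [Fintype σ] [DecidableEq σ]

omit [DecidableEq σ] in
lemma degree_sum_fintype (m : σ →₀ ℕ) : m.degree = ∑ i : σ, m i := by
  rw [Finsupp.degree]
  exact Finset.sum_subset (Finset.subset_univ _) (by
    intro x _ hx
    simpa using hx)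

lemma euler_monomial (m : σ →₀ ℕ) (c : k) :
    ∑ i : σ, X i * pderiv i (monomial m c) = m.degree • monomial m c := by
  rw [degree_sum_fintype, Finset.sum_smul]
  refine Finset.sum_congr rfl fun i _ => ?_
  rw [pderiv_monomial]
  rcases Nat.eq_zero_or_pos (m i) with h | h
  · simp [h]
  · have hle : Finsupp.single i 1 ≤ m := by
      rw [Finsupp.single_le_iff]; exact h
    rw [X, monomial_mul, one_mul, add_comm, tsub_add_cancel_of_le hle, smul_monomial,
      mul_comm, nsmul_eq_mul]

lemma euler {d : ℕ} {F : MvPolynomial σ k} (hF : F.IsHomogeneous d) :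
    ∑ i : σ, X i * pderiv i F = d • F := by
  conv_lhs => rw [← support_sum_monomial_coeff F]
  conv_rhs => rw [← support_sum_monomial_coeff F]
  simp_rw [map_sum, Finset.mul_sum, Finset.smul_sum]
  rw [Finset.sum_comm]
  refine Finset.sum_congr rfl fun m hm => ?_
  rw [euler_monomial]
  congr 1
  rw [Finsupp.degree_eq_weight_one]
  exact hF (mem_support_iff.mp hm)

omit [Fintype σ] in
lemma isHomogeneous_pderiv {d : ℕ} {F : MvPolynomial σ k} (hF : F.IsHomogeneous d) (i : σ) :
    (pderiv i F).IsHomogeneous (d - 1) := by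
  conv => enter [1]; rw [← support_sum_monomial_coeff F]
  rw [map_sum]
  refine IsHomogeneous.sum _ _ _ fun m hm => ?_
  rw [pderiv_monomial]
  rcases Nat.eq_zero_or_pos (m i) with h | h
  · simp only [h, Nat.cast_zero, mul_zero, monomial_zero]
    exact isHomogeneous_zero _ _ _
  · refine isHomogeneous_monomial _ ?_
    have hle : Finsupp.single i 1 ≤ m := by
      rw [Finsupp.single_le_iff]; exact h
    have hdeg : m.degree = d := by
      rw [Finsupp.degree_eq_weight_one]; exact hF (mem_support_iff.mp hm)
    have hsub : (m - Finsupp.single i 1) + Finsupp.single i 1 = m :=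
      tsub_add_cancel_of_le hle
    have hadd : (m - Finsupp.single i 1).degree + (Finsupp.single i 1).degree = m.degree := by
      conv_rhs => rw [← hsub]
      simp [Finsupp.degree_eq_weight_one, map_add]
    have hsingle : (Finsupp.single i 1 : σ →₀ ℕ).degree = 1 := by
      exact Finsupp.degree_single i 1
    omega

omit [Fintype σ] [DecidableEq σ] in
lemma eq_C_of_isHomogeneous_zero {F : MvPolynomial σ k} (hF : F.IsHomogeneous 0) :
    F = C (coeff 0 F) := by
  classical
  ext d
  rcases eq_or_ne d 0 with rfl | hd
  · simp
  · rw [hF.coeff_eq_zero (by rwa [Ne, Finsupp.degree_eq_zero_iff]), coeff_C, if_neg (Ne.symm hd)]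

omit [Fintype σ] [DecidableEq σ] in
/-- Any two algebra homomorphisms agree on a polynomial homogeneous of degree `0`. -/
lemma hom_congr_isHomogeneous_zero {B : Type*} [CommSemiring B] [Algebra k B]
    {F : MvPolynomial σ k} (hF : F.IsHomogeneous 0) (φ ψ : MvPolynomial σ k →ₐ[k] B) :
    φ F = ψ F := by
  rw [eq_C_of_isHomogeneous_zero hF, ← MvPolynomial.algebraMap_eq, AlgHom.commutes,
    AlgHom.commutes]

/-- Euler's identity transported through an algebra homomorphism. -/
lemma euler_hom {B : Type*} [CommSemiring B] [Algebra k B]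
    {d : ℕ} {F : MvPolynomial σ k} (hF : F.IsHomogeneous d)
    (φ : MvPolynomial σ k →ₐ[k] B) :
    ∑ i : σ, φ (X i) * φ (pderiv i F) = d • φ F := by
  rw [← map_nsmul, ← euler hF, map_sum]
  simp only [map_mul]

end Homog

/-! ### The setting of the theorem -/

section Main
variable {k : Type*} [Field k] [CharZero k] {n : ℕ}

local notation "B" => MvPolynomial (Option (Fin n ⊕ Fin n)) k
local notation "P" => MvPolynomial (Fin n) k

private noncomputable def ia : P →ₐ[k] B := aeval fun i : Fin n => X (some (Sum.inl i))
private noncomputable def ib : P →ₐ[k] B := aeval fun i : Fin n => X (some (Sum.inr i))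

lemma ia_eq_rename (p : P) : ia p = rename (fun i : Fin n => some (Sum.inl i)) p := by
  rw [ia]; exact DFunLike.congr_fun (algHom_ext fun i => by simp) p

lemma ib_eq_rename (p : P) : ib p = rename (fun i : Fin n => some (Sum.inr i)) p := by
  rw [ib]; exact DFunLike.congr_fun (algHom_ext fun i => by simp) p

lemma pderiv_ia (i : Fin n) (p : P) :
    pderiv (some (Sum.inl i)) (ia p) = ia (pderiv i p) := by
  rw [ia_eq_rename, ia_eq_rename]
  have hinj : Function.Injective (fun i : Fin n => (some (Sum.inl i) : Option (Fin n ⊕ Fin n))) :=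
    fun a b hab => by simpa using hab
  exact pderiv_rename hinj i p

lemma pderiv_ib (i : Fin n) (p : P) :
    pderiv (some (Sum.inr i)) (ib p) = ib (pderiv i p) := by
  rw [ib_eq_rename, ib_eq_rename]
  have hinj : Function.Injective (fun i : Fin n => (some (Sum.inr i) : Option (Fin n ⊕ Fin n))) :=
    fun a b hab => by simpa using hab
  exact pderiv_rename hinj i p

lemma pderiv_rename_zero {σ₁ σ₂ : Type*} [DecidableEq σ₂] {f : σ₁ → σ₂} {j : σ₂}
    (hj : ∀ x, f x ≠ j) (p : MvPolynomial σ₁ k) :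
    pderiv j (rename f p) = 0 := by
  induction p using MvPolynomial.induction_on with
  | C c => simp
  | add p q hp hq => simp [hp, hq]
  | mul_X p s hp => rw [map_mul, rename_X, pderiv_mul, hp, pderiv_X_of_ne (hj s)]; simp

lemma pderiv_inl_ib (i : Fin n) (p : P) : pderiv (some (Sum.inl i)) (ib p) = 0 := by
  rw [ib_eq_rename]; exact pderiv_rename_zero (by simp) p

lemma pderiv_inr_ia (i : Fin n) (p : P) : pderiv (some (Sum.inr i)) (ia p) = 0 := by
  rw [ia_eq_rename]; exact pderiv_rename_zero (by simp) p

/-- Action of an `α`-polynomial on a product `F(x)·G(y)`. -/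
lemma tAct_ia (h A A' : P) :
    tAct (ia h) (ia A * ib A') = ia (apContract h A) * ib A' := by
  induction h using MvPolynomial.induction_on generalizing A with
  | C c =>
    rw [show (ia (C c) : B) = C c by rw [ia]; simp, tAct_C, apContract_C, map_smul,
      smul_mul_assoc]
  | add p q hp hq => rw [map_add, tAct_add, apContract_add, map_add, add_mul, hp, hq]
  | mul_X p i hp =>
    rw [map_mul, tAct_mul, show (ia (X i) : B) = X (some (Sum.inl i)) by rw [ia]; simp,
      tAct_X_some]
    rw [pderiv_mul, pderiv_inl_ib, mul_zero, add_zero, pderiv_ia, hp,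
      apContract_mul, apContract_X]

lemma tAct_ib (h A A' : P) :
    tAct (ib h) (ia A * ib A') = ia A * ib (apContract h A') := by
  induction h using MvPolynomial.induction_on generalizing A' with
  | C c =>
    rw [show (ib (C c) : B) = C c by rw [ib]; simp, tAct_C, apContract_C, map_smul,
      mul_smul_comm]
  | add p q hp hq => rw [map_add, tAct_add, apContract_add, map_add, mul_add, hp, hq]
  | mul_X p i hp =>
    rw [map_mul, tAct_mul, show (ib (X i) : B) = X (some (Sum.inr i)) by rw [ib]; simp,
      tAct_X_some]
    rw [pderiv_mul, pderiv_inr_ia, zero_mul, zero_add, pderiv_ib, hp,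
      apContract_mul, apContract_X]


lemma ia_X (i : Fin n) : (ia (X i) : B) = X (some (Sum.inl i)) := by rw [ia]; simp

lemma ib_X (i : Fin n) : (ib (X i) : B) = X (some (Sum.inr i)) := by rw [ib]; simp

/-- The substitution `x_i ↦ t·x_i + y_i`. -/
private noncomputable def es : P →ₐ[k] B :=
  aeval fun i : Fin n => (X none * X (some (Sum.inl i)) + X (some (Sum.inr i)) : B)

lemma es_X (i : Fin n) :
    (es (X i) : B) = X none * X (some (Sum.inl i)) + X (some (Sum.inr i)) := by rw [es]; simp

/-- Degree-1 expansion. -/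
lemma exp1 {G : P} (hG : G.IsHomogeneous 1) :
    (es G : B) = X none * ia G + ib G := by
  have hd : ∀ i, (pderiv i G).IsHomogeneous 0 := fun i => by
    simpa using isHomogeneous_pderiv hG i
  have e0 : ∑ i : Fin n, es (X i) * es (pderiv i G) = 1 • (es G : B) := euler_hom hG es
  have eA : ∑ i : Fin n, ia (X i) * ia (pderiv i G) = 1 • (ia G : B) := euler_hom hG ia
  have eB : ∑ i : Fin n, ib (X i) * ib (pderiv i G) = 1 • (ib G : B) := euler_hom hG ib
  rw [one_smul] at e0 eA eB
  rw [← e0, ← eA, ← eB, Finset.mul_sum, ← Finset.sum_add_distrib]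
  refine Finset.sum_congr rfl fun i _ => ?_
  rw [es_X, ia_X, ib_X,
    hom_congr_isHomogeneous_zero (hd i) es ia,
    hom_congr_isHomogeneous_zero (hd i) ib ia]
  ring

/-- The symmetric-swap identity in degree 2. -/
lemma swap2 {G : P} (hG : G.IsHomogeneous 2) :
    ∑ i : Fin n, (X (some (Sum.inr i)) : B) * ia (pderiv i G)
      = ∑ i : Fin n, (X (some (Sum.inl i)) : B) * ib (pderiv i G) := by
  have h1 : ∀ i, (pderiv i G).IsHomogeneous 1 := fun i => by
    simpa using isHomogeneous_pderiv hG i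
  have h0 : ∀ i j, (pderiv j (pderiv i G)).IsHomogeneous 0 := fun i j => by
    simpa using isHomogeneous_pderiv (h1 i) j
  have lhs_eq : ∀ i : Fin n, (ia (pderiv i G) : B)
      = ∑ m : Fin n, X (some (Sum.inl m)) * ia (pderiv m (pderiv i G)) := by
    intro i
    have := euler_hom (h1 i) (ia (k := k) (n := n))
    rw [one_smul] at this
    rw [← this]
    exact Finset.sum_congr rfl fun m _ => by rw [ia_X]
  have rhs_eq : ∀ i : Fin n, (ib (pderiv i G) : B)
      = ∑ m : Fin n, X (some (Sum.inr m)) * ia (pderiv m (pderiv i G)) := by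
    intro i
    have := euler_hom (h1 i) (ib (k := k) (n := n))
    rw [one_smul] at this
    rw [← this]
    exact Finset.sum_congr rfl fun m _ => by
      rw [ib_X, hom_congr_isHomogeneous_zero (h0 i m) ib ia]
  calc ∑ i : Fin n, (X (some (Sum.inr i)) : B) * ia (pderiv i G)
      = ∑ i : Fin n, ∑ m : Fin n,
          (X (some (Sum.inr i)) : B) * (X (some (Sum.inl m)) * ia (pderiv m (pderiv i G))) := by
        refine Finset.sum_congr rfl fun i _ => ?_
        rw [lhs_eq i, Finset.mul_sum]
    _ = ∑ m : Fin n, ∑ i : Fin n,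
          (X (some (Sum.inr i)) : B) * (X (some (Sum.inl m)) * ia (pderiv m (pderiv i G))) :=
        Finset.sum_comm
    _ = ∑ i : Fin n, (X (some (Sum.inl i)) : B) * ib (pderiv i G) := by
        refine Finset.sum_congr rfl fun m _ => ?_
        rw [rhs_eq m, Finset.mul_sum]
        refine Finset.sum_congr rfl fun i _ => ?_
        rw [pderiv_comm' m i]
        ring


lemma nsmul_cancel {M : Type*} [AddCommGroup M] [Module k M] {d : ℕ} (hd : d ≠ 0)
    {A C : M} (h : d • A = d • C) : A = C := by
  have h' : ((d : k) • A) = ((d : k) • C) := by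
    rw [Nat.cast_smul_eq_nsmul, Nat.cast_smul_eq_nsmul]; exact h
  exact smul_right_injective M (by exact_mod_cast hd : (d : k) ≠ 0) h'

/-- Degree-2 expansion. -/
lemma exp2 {G : P} (hG : G.IsHomogeneous 2) :
    (es G : B) = (X none) ^ 2 * ia G
      + X none * ∑ i : Fin n, X (some (Sum.inl i)) * ib (pderiv i G) + ib G := by
  have h1 : ∀ i, (pderiv i G).IsHomogeneous 1 := fun i => by
    simpa using isHomogeneous_pderiv hG i
  have e0 : ∑ i : Fin n, es (X i) * es (pderiv i G) = 2 • (es G : B) := euler_hom hG es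
  have eA : ∑ i : Fin n, (X (some (Sum.inl i)) : B) * ia (pderiv i G) = 2 • (ia G : B) := by
    rw [← euler_hom hG ia]
    exact Finset.sum_congr rfl fun i _ => by rw [ia_X]
  have eB : ∑ i : Fin n, (X (some (Sum.inr i)) : B) * ib (pderiv i G) = 2 • (ib G : B) := by
    rw [← euler_hom hG ib]
    exact Finset.sum_congr rfl fun i _ => by rw [ib_X]
  have comb : ∑ i : Fin n, es (X i) * es (pderiv i G)
      = (X none : B) ^ 2 * (∑ i : Fin n, X (some (Sum.inl i)) * ia (pderiv i G))
        + X none * (∑ i : Fin n, X (some (Sum.inl i)) * ib (pderiv i G))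
        + X none * (∑ i : Fin n, X (some (Sum.inr i)) * ia (pderiv i G))
        + ∑ i : Fin n, X (some (Sum.inr i)) * ib (pderiv i G) := by
    rw [Finset.mul_sum, Finset.mul_sum, Finset.mul_sum, ← Finset.sum_add_distrib,
      ← Finset.sum_add_distrib, ← Finset.sum_add_distrib]
    refine Finset.sum_congr rfl fun i _ => ?_
    rw [es_X, exp1 (h1 i)]
    ring
  have key : 2 • (es G : B)
      = 2 • ((X none) ^ 2 * ia G
          + X none * ∑ i : Fin n, X (some (Sum.inl i)) * ib (pderiv i G) + ib G) := by
    rw [← e0, comb, eA, swap2 hG, eB]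
    push_cast [nsmul_eq_mul]
    ring
  exact nsmul_cancel (k := k) two_ne_zero key

/-- Degree-3 expansion: `F(t·x + y)` in terms of the polars of `F`. -/
lemma exp3 {G : P} (hG : G.IsHomogeneous 3) :
    (es G : B) = (X none) ^ 3 * ia G
      + (X none) ^ 2 * ∑ i : Fin n, X (some (Sum.inr i)) * ia (pderiv i G)
      + X none * ∑ i : Fin n, X (some (Sum.inl i)) * ib (pderiv i G) + ib G := by
  have h2 : ∀ i, (pderiv i G).IsHomogeneous 2 := fun i => by
    simpa using isHomogeneous_pderiv hG i
  have e0 : ∑ i : Fin n, es (X i) * es (pderiv i G) = 3 • (es G : B) := euler_hom hG es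
  have eA : ∑ i : Fin n, (X (some (Sum.inl i)) : B) * ia (pderiv i G) = 3 • (ia G : B) := by
    rw [← euler_hom hG ia]
    exact Finset.sum_congr rfl fun i _ => by rw [ia_X]
  have eB : ∑ i : Fin n, (X (some (Sum.inr i)) : B) * ib (pderiv i G) = 3 • (ib G : B) := by
    rw [← euler_hom hG ib]
    exact Finset.sum_congr rfl fun i _ => by rw [ib_X]
  -- the inner second-derivative double sums
  have eA2 : ∀ i, ∑ l : Fin n, (X (some (Sum.inl l)) : B) * ia (pderiv l (pderiv i G))
      = 2 • (ia (pderiv i G) : B) := by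
    intro i
    rw [← euler_hom (h2 i) ia]
    exact Finset.sum_congr rfl fun l _ => by rw [ia_X]
  have eB2 : ∀ i, ∑ l : Fin n, (X (some (Sum.inr l)) : B) * ib (pderiv l (pderiv i G))
      = 2 • (ib (pderiv i G) : B) := by
    intro i
    rw [← euler_hom (h2 i) ib]
    exact Finset.sum_congr rfl fun l _ => by rw [ib_X]
  -- E2 : the x·x·(second derivative in y) double sum
  have E2 : ∑ i : Fin n, (X (some (Sum.inl i)) : B)
        * (∑ l : Fin n, X (some (Sum.inl l)) * ib (pderiv l (pderiv i G)))
      = 2 • ∑ i : Fin n, (X (some (Sum.inr i)) : B) * ia (pderiv i G) := by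
    calc ∑ i : Fin n, (X (some (Sum.inl i)) : B)
          * (∑ l : Fin n, X (some (Sum.inl l)) * ib (pderiv l (pderiv i G)))
        = ∑ i : Fin n, ∑ l : Fin n, (X (some (Sum.inl i)) : B)
            * (X (some (Sum.inr l)) * ia (pderiv l (pderiv i G))) := by
          refine Finset.sum_congr rfl fun i _ => ?_
          rw [← swap2 (h2 i), Finset.mul_sum]
      _ = ∑ l : Fin n, ∑ i : Fin n, (X (some (Sum.inl i)) : B)
            * (X (some (Sum.inr l)) * ia (pderiv l (pderiv i G))) := Finset.sum_comm
      _ = ∑ l : Fin n, (X (some (Sum.inr l)) : B)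
            * ∑ i : Fin n, (X (some (Sum.inl i)) : B) * ia (pderiv i (pderiv l G)) := by
          refine Finset.sum_congr rfl fun l _ => ?_
          rw [Finset.mul_sum]
          refine Finset.sum_congr rfl fun i _ => ?_
          rw [pderiv_comm' l i]
          ring
      _ = 2 • ∑ i : Fin n, (X (some (Sum.inr i)) : B) * ia (pderiv i G) := by
          rw [Finset.smul_sum]
          refine Finset.sum_congr rfl fun l _ => ?_
          rw [eA2 l, mul_smul_comm]
  -- E1 : the y·x·(second derivative) double sum
  have E1 : ∑ i : Fin n, (X (some (Sum.inr i)) : B)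
        * (∑ l : Fin n, X (some (Sum.inl l)) * ib (pderiv l (pderiv i G)))
      = 2 • ∑ i : Fin n, (X (some (Sum.inl i)) : B) * ib (pderiv i G) := by
    calc ∑ i : Fin n, (X (some (Sum.inr i)) : B)
          * (∑ l : Fin n, X (some (Sum.inl l)) * ib (pderiv l (pderiv i G)))
        = ∑ i : Fin n, ∑ l : Fin n, (X (some (Sum.inr i)) : B)
            * (X (some (Sum.inl l)) * ib (pderiv l (pderiv i G))) := by
          refine Finset.sum_congr rfl fun i _ => ?_
          rw [Finset.mul_sum]
      _ = ∑ l : Fin n, ∑ i : Fin n, (X (some (Sum.inr i)) : B)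
            * (X (some (Sum.inl l)) * ib (pderiv l (pderiv i G))) := Finset.sum_comm
      _ = ∑ l : Fin n, (X (some (Sum.inl l)) : B)
            * ∑ i : Fin n, (X (some (Sum.inr i)) : B) * ib (pderiv i (pderiv l G)) := by
          refine Finset.sum_congr rfl fun l _ => ?_
          rw [Finset.mul_sum]
          refine Finset.sum_congr rfl fun i _ => ?_
          rw [pderiv_comm' l i]
          ring
      _ = 2 • ∑ i : Fin n, (X (some (Sum.inl i)) : B) * ib (pderiv i G) := by
          rw [Finset.smul_sum]
          refine Finset.sum_congr rfl fun l _ => ?_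
          rw [eB2 l, mul_smul_comm]
  have comb : ∑ i : Fin n, es (X i) * es (pderiv i G)
      = (X none : B) ^ 3 * (∑ i : Fin n, X (some (Sum.inl i)) * ia (pderiv i G))
        + (X none) ^ 2 * (∑ i : Fin n, (X (some (Sum.inl i)) : B)
            * (∑ l : Fin n, X (some (Sum.inl l)) * ib (pderiv l (pderiv i G))))
        + (X none) ^ 2 * (∑ i : Fin n, X (some (Sum.inr i)) * ia (pderiv i G))
        + X none * (∑ i : Fin n, X (some (Sum.inl i)) * ib (pderiv i G))
        + X none * (∑ i : Fin n, (X (some (Sum.inr i)) : B)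
            * (∑ l : Fin n, X (some (Sum.inl l)) * ib (pderiv l (pderiv i G))))
        + ∑ i : Fin n, X (some (Sum.inr i)) * ib (pderiv i G) := by
    have step : ∀ i : Fin n, es (X i) * es (pderiv i G)
        = (X none : B) ^ 3 * (X (some (Sum.inl i)) * ia (pderiv i G))
          + (X none) ^ 2 * ((X (some (Sum.inl i)) : B)
              * (∑ l : Fin n, X (some (Sum.inl l)) * ib (pderiv l (pderiv i G))))
          + (X none) ^ 2 * (X (some (Sum.inr i)) * ia (pderiv i G))
          + X none * (X (some (Sum.inl i)) * ib (pderiv i G))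
          + X none * ((X (some (Sum.inr i)) : B)
              * (∑ l : Fin n, X (some (Sum.inl l)) * ib (pderiv l (pderiv i G))))
          + X (some (Sum.inr i)) * ib (pderiv i G) := by
      intro i
      rw [es_X, exp2 (h2 i)]
      ring
    rw [Finset.sum_congr rfl fun i _ => step i]
    simp only [Finset.sum_add_distrib, ← Finset.mul_sum]
  have key : 3 • (es G : B)
      = 3 • ((X none) ^ 3 * ia G
          + (X none) ^ 2 * ∑ i : Fin n, X (some (Sum.inr i)) * ia (pderiv i G)
          + X none * ∑ i : Fin n, X (some (Sum.inl i)) * ib (pderiv i G) + ib G) := by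
    rw [← e0, comb, eA, eB, E2, E1]
    push_cast [nsmul_eq_mul]
    ring
  exact nsmul_cancel (k := k) three_ne_zero key


end Main

/-- **The fractal polynomial Γ(t).** Suppose `g ∘ F = 1` and `Q_i ∘ F = x_i` for the apolarity
action of `S = k[α]` on `P = k[x]` (`α_i = ∂/∂x_i`), where `F` is a homogeneous cubic. In
`k[t,α,β] = k[t,x,y] = MvPolynomial (Option (Fin n ⊕ Fin n)) k`
(with `t = X none`, `α_i = x_i = X (some (Sum.inl i))`, `β_i = y_i = X (some (Sum.inr i))`),
set `Γ(t) = g(α) + t·Σ_i β_i·Q_i(α) + t²·Σ_i α_i·Q_i(β) + t³·g(β)`. Then for the relative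
apolarity action (`α_i = ∂/∂x_i`, `β_i = ∂/∂y_i`, `t` by multiplication) one has
`Γ(t) ∘ (F(x)·F(y)) = F(t·x + y)`. -/
theorem gamma_act_eq {k : Type*} [Field k] [CharZero k] {n : ℕ}
    (F : MvPolynomial (Fin n) k) (hF : F.IsHomogeneous 3)
    (g : MvPolynomial (Fin n) k) (hg : apContract g F = 1)
    (Q : Fin n → MvPolynomial (Fin n) k) (hQ : ∀ i, apContract (Q i) F = X i) :
    letI B := MvPolynomial (Option (Fin n ⊕ Fin n)) k
    letI ια : MvPolynomial (Fin n) k →ₐ[k] B :=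
      aeval fun i : Fin n => X (some (Sum.inl i))
    letI ιβ : MvPolynomial (Fin n) k →ₐ[k] B :=
      aeval fun i : Fin n => X (some (Sum.inr i))
    letI Γ : B := ια g + X none * ∑ i : Fin n, X (some (Sum.inr i)) * ια (Q i)
      + (X none) ^ 2 * ∑ i : Fin n, X (some (Sum.inl i)) * ιβ (Q i)
      + (X none) ^ 3 * ιβ g
    tAct Γ (ια F * ιβ F)
      = aeval (fun i : Fin n =>
          (X none * X (some (Sum.inl i)) + X (some (Sum.inr i)) : B)) F := by
  show tAct (ia g + X none * ∑ i : Fin n, X (some (Sum.inr i)) * ia (Q i)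
      + (X none) ^ 2 * ∑ i : Fin n, X (some (Sum.inl i)) * ib (Q i)
      + (X none) ^ 3 * ib g) (ia F * ib F) = es F
  have T1 : tAct (ia g) (ia F * ib F) = ib F := by
    rw [tAct_ia g F F, hg, map_one, one_mul]
  have T2 : tAct (X none * ∑ i : Fin n, X (some (Sum.inr i)) * ia (Q i)) (ia F * ib F)
      = X none * ∑ i : Fin n, X (some (Sum.inl i)) * ib (pderiv i F) := by
    rw [tAct_mul, tAct_sum, tAct_X_none]
    congr 1
    refine Finset.sum_congr rfl fun i _ => ?_
    rw [tAct_mul, tAct_ia (Q i) F F, hQ i, ia_X, tAct_X_some,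
      pderiv_mul, pderiv_X_of_ne (by simp), zero_mul, zero_add, pderiv_ib]
  have T3 : tAct ((X none) ^ 2 * ∑ i : Fin n, X (some (Sum.inl i)) * ib (Q i)) (ia F * ib F)
      = (X none) ^ 2 * ∑ i : Fin n, X (some (Sum.inr i)) * ia (pderiv i F) := by
    rw [tAct_pow_none_mul, tAct_sum]
    congr 1
    refine Finset.sum_congr rfl fun i _ => ?_
    rw [tAct_mul, tAct_ib (Q i) F F, hQ i, ib_X, tAct_X_some,
      pderiv_mul, pderiv_ia, pderiv_X_of_ne (by simp), mul_zero, add_zero]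
    ring
  have T4 : tAct ((X none) ^ 3 * ib g) (ia F * ib F) = (X none) ^ 3 * ia F := by
    rw [tAct_pow_none_mul, tAct_ib g F F, hg, map_one, mul_one]
  rw [tAct_add, tAct_add, tAct_add, T1, T2, T3, T4, exp3 hF]
  ring
end

section
/- The k[t]-algebra k[t, α, β]/F(t·x+y)^⊥ is a free k[t]-module, being isomorphic to k[t] ⊗_k (k[β]/F(y)^⊥). -/
set_option maxHeartbeats 1000000
set_option synthInstance.maxHeartbeats 400000

open MvPolynomial


namespace ApolarAux

variable {k : Type*} [CommSemiring k] {σ σ' : Type*}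
variable {M N : Type*} [AddCommMonoid M] [Module k M] [AddCommMonoid N] [Module k N]

/-- generalized opPow -/
noncomputable def opPowG (op : σ → Module.End k M) (m : σ →₀ ℕ) : Module.End k M :=
  m.support.toList.foldr (fun i L => (op i) ^ (m i) * L) 1

noncomputable def apActG (op : σ → Module.End k M) (h : MvPolynomial σ k) (z : M) : M :=
  h.support.sum fun m => (h.coeff m) • (opPowG op m z)

lemma opPowG_eq_prod (op : σ → Module.End k M) (m : σ →₀ ℕ) :
    opPowG op m = (m.support.toList.map fun i => op i ^ m i).prod := by
  rw [opPowG]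
  induction m.support.toList with
  | nil => rfl
  | cons a l ih => simp [ih]

lemma opPowG_eq_noncommProd (op : σ → Module.End k M)
    (hc : ∀ i j, Commute (op i) (op j)) (m : σ →₀ ℕ) :
    opPowG op m = m.support.noncommProd (fun i => op i ^ m i)
      (fun i _ j _ _ => (hc i j).pow_pow _ _) := by
  classical
  rw [opPowG_eq_prod]
  rw [← Finset.noncommProd_toFinset (m.support.toList) (fun i => op i ^ m i)
    (by intro x hx y hy _; exact (hc x y).pow_pow _ _) (Finset.nodup_toList _)]
  exact Finset.noncommProd_congr (by simp) (fun _ _ => rfl) _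

lemma opPowG_zero (op : σ → Module.End k M) : opPowG op 0 = 1 := by
  simp [opPowG]

lemma opPowG_single (op : σ → Module.End k M) (v : σ) (e : ℕ) :
    opPowG op (Finsupp.single v e) = op v ^ e := by
  rcases eq_or_ne e 0 with rfl | he
  · simp [opPowG_zero]
  · rw [opPowG, Finsupp.support_single_ne_zero v he, Finset.toList_singleton]
    simp

lemma opPowG_superset (op : σ → Module.End k M) (hc : ∀ i j, Commute (op i) (op j))
    {m : σ →₀ ℕ} {s : Finset σ} (hs : m.support ⊆ s) :
    opPowG op m = s.noncommProd (fun i => op i ^ m i)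
      (fun i _ j _ _ => (hc i j).pow_pow _ _) := by
  classical
  rw [opPowG_eq_noncommProd op hc m]
  have hu : s = m.support ∪ (s \ m.support) := by
    rw [Finset.union_sdiff_of_subset hs]
  rw [Finset.noncommProd_congr hu (fun _ _ => rfl)
    (fun i hi j hj _ => (hc i j).pow_pow _ _)]
  refine Eq.trans ?_ (Finset.noncommProd_union_of_disjoint Finset.disjoint_sdiff _ _).symm
  have h1 : ((s \ m.support).noncommProd (fun i => op i ^ m i)
      (fun i _ j _ _ => (hc i j).pow_pow _ _)) = 1 := by
    have := Finset.noncommProd_eq_pow_card (s \ m.support) (fun i => op i ^ m i)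
      (fun i _ j _ _ => (hc i j).pow_pow _ _) 1 ?_
    · rw [this, one_pow]
    · intro x hx
      have : x ∉ m.support := (Finset.mem_sdiff.mp hx).2
      rw [Finsupp.notMem_support_iff.mp this, pow_zero]
  rw [h1, mul_one]

lemma opPowG_add (op : σ → Module.End k M) (hc : ∀ i j, Commute (op i) (op j))
    (m₁ m₂ : σ →₀ ℕ) :
    opPowG op (m₁ + m₂) = opPowG op m₁ * opPowG op m₂ := by
  classical
  set s := m₁.support ∪ m₂.support with hs
  have h1 : m₁.support ⊆ s := Finset.subset_union_left
  have h2 : m₂.support ⊆ s := Finset.subset_union_right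
  have h12 : (m₁ + m₂).support ⊆ s := Finsupp.support_add
  rw [opPowG_superset op hc h1, opPowG_superset op hc h2, opPowG_superset op hc h12]
  have hff : (↑s : Set σ).Pairwise (Function.onFun Commute fun i => op i ^ m₁ i) :=
    fun i _ j _ _ => (hc i j).pow_pow _ _
  have hgg : (↑s : Set σ).Pairwise (Function.onFun Commute fun i => op i ^ m₂ i) :=
    fun i _ j _ _ => (hc i j).pow_pow _ _
  have hgf : (↑s : Set σ).Pairwise fun x y => Commute (op x ^ m₂ x) (op y ^ m₁ y) :=
    fun i _ j _ _ => (hc i j).pow_pow _ _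
  have hx := Finset.noncommProd_congr (s₁ := s) (s₂ := s)
    (f := fun i => op i ^ (m₁ + m₂) i)
    (g := (fun i => op i ^ m₁ i) * (fun i => op i ^ m₂ i)) rfl
    (fun x _ => by simp [Finsupp.add_apply, pow_add])
    (fun i hi j hj hij => (hc i j).pow_pow _ _)
  rw [hx]
  rw [show (s.noncommProd ((fun i => op i ^ m₁ i) * fun i => op i ^ m₂ i) _) =
    (s.noncommProd (fun i => op i ^ m₁ i) hff * s.noncommProd (fun i => op i ^ m₂ i) hgg)
    from Finset.noncommProd_mul_distrib _ _ hff hgg hgf]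

/-- The algebra morphism sending a polynomial to the corresponding product of operators. -/
noncomputable def opAlgHomG (op : σ → Module.End k M) (hc : ∀ i j, Commute (op i) (op j)) :
    MvPolynomial σ k →ₐ[k] Module.End k M :=
  letI : DecidableEq (σ →₀ ℕ) := Classical.decEq _
  AddMonoidAlgebra.lift k (Module.End k M) (σ →₀ ℕ)
    { toFun := fun m => opPowG op (Multiplicative.toAdd m)
      map_one' := opPowG_zero op
      map_mul' := fun a b => opPowG_add op hc _ _ }

lemma opAlgHomG_monomial (op : σ → Module.End k M) (hc : ∀ i j, Commute (op i) (op j))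
    (m : σ →₀ ℕ) (c : k) :
    opAlgHomG op hc (monomial m c) = c • opPowG op m := by
  letI : DecidableEq (σ →₀ ℕ) := Classical.decEq _
  rw [opAlgHomG, ← single_eq_monomial]
  exact AddMonoidAlgebra.lift_single _ _ _

lemma opAlgHomG_X (op : σ → Module.End k M) (hc : ∀ i j, Commute (op i) (op j)) (v : σ) :
    opAlgHomG op hc (X v) = op v := by
  rw [X, opAlgHomG_monomial, opPowG_single, pow_one, one_smul]

lemma apActG_def (op : σ → Module.End k M) (h : MvPolynomial σ k) (z : M) :
    apActG op h z = Finsupp.sum (AddMonoidAlgebra.coeff h) fun m c => c • opPowG op m z := rfl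

lemma apActG_monomial (op : σ → Module.End k M) (m : σ →₀ ℕ) (c : k) (z : M) :
    apActG op (monomial m c) z = c • opPowG op m z := by
  rw [apActG_def, ← single_eq_monomial, AddMonoidAlgebra.coeff_single,
    Finsupp.sum_single_index (by simp)]

lemma apActG_add (op : σ → Module.End k M) (h₁ h₂ : MvPolynomial σ k) (z : M) :
    apActG op (h₁ + h₂) z = apActG op h₁ z + apActG op h₂ z := by
  classical
  rw [apActG_def, apActG_def, apActG_def]
  exact Finsupp.sum_add_index (by simp) (by intros; rw [add_smul])

lemma apActG_eq (op : σ → Module.End k M) (hc : ∀ i j, Commute (op i) (op j))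
    (h : MvPolynomial σ k) (z : M) :
    apActG op h z = opAlgHomG op hc h z := by
  induction h using MvPolynomial.induction_on' with
  | monomial m c => rw [apActG_monomial, opAlgHomG_monomial]; rfl
  | add p q hp hq => rw [apActG_add, map_add, hp, hq]; rfl

lemma apActG_mul (op : σ → Module.End k M) (hc : ∀ i j, Commute (op i) (op j))
    (h₁ h₂ : MvPolynomial σ k) (z : M) :
    apActG op (h₁ * h₂) z = apActG op h₁ (apActG op h₂ z) := by
  rw [apActG_eq op hc, apActG_eq op hc, apActG_eq op hc, map_mul]
  rfl

lemma opPowG_pow_comp (op : σ → Module.End k M) (op' : σ' → Module.End k N)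
    (g : σ → σ') (f : M →ₗ[k] N) (hint : ∀ v (z : M), op' (g v) (f z) = f (op v z))
    (v : σ) (e : ℕ) (z : M) : ((op' (g v)) ^ e) (f z) = f (((op v) ^ e) z) := by
  induction e generalizing z with
  | zero => simp
  | succ e ih =>
    rw [pow_succ, pow_succ, Module.End.mul_apply, Module.End.mul_apply, hint, ih]

lemma opPowG_mapDomain (op : σ → Module.End k M) (op' : σ' → Module.End k N)
    (g : σ → σ') (f : M →ₗ[k] N)
    (hc : ∀ i j, Commute (op i) (op j)) (hc' : ∀ i j, Commute (op' i) (op' j))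
    (hint : ∀ v (z : M), op' (g v) (f z) = f (op v z)) (m : σ →₀ ℕ) (z : M) :
    opPowG op' (Finsupp.mapDomain g m) (f z) = f (opPowG op m z) := by
  induction m using Finsupp.induction generalizing z with
  | zero => simp [Finsupp.mapDomain_zero, opPowG_zero]
  | single_add a b m' ha hb ih =>
    rw [Finsupp.mapDomain_add, Finsupp.mapDomain_single, opPowG_add op hc,
      opPowG_add op' hc', Module.End.mul_apply, Module.End.mul_apply,
      opPowG_single, opPowG_single, ih, opPowG_pow_comp op op' g f hint]

lemma apActG_comp (op : σ → Module.End k M) (op' : σ' → Module.End k N)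
    (g : σ → σ') (f : M →ₗ[k] N)
    (hc : ∀ i j, Commute (op i) (op j)) (hc' : ∀ i j, Commute (op' i) (op' j))
    (hint : ∀ v (z : M), op' (g v) (f z) = f (op v z)) (h : MvPolynomial σ k) (z : M) :
    apActG op' (rename g h) (f z) = f (apActG op h z) := by
  induction h using MvPolynomial.induction_on' with
  | monomial m c =>
    rw [rename_monomial, apActG_monomial, apActG_monomial,
      opPowG_mapDomain op op' g f hc hc' hint, map_smul]
  | add p q hp hq => rw [map_add, apActG_add, apActG_add, hp, hq, map_add]

section ChainRule

variable {k : Type*} [CommSemiring k] {σ σ' : Type*} [DecidableEq σ] [DecidableEq σ']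

lemma pderiv_aeval_eq (u : σ → MvPolynomial σ' k) (v : σ) (v' : σ')
    (c : MvPolynomial σ' k)
    (hu : ∀ w, pderiv v' (u w) = if w = v then c else 0) (q : MvPolynomial σ k) :
    pderiv v' (aeval u q) = c * aeval u (pderiv v q) := by
  induction q using MvPolynomial.induction_on with
  | C a => simp [aeval_C, pderiv_C, algebraMap_eq]
  | add p q hp hq => simp only [map_add, hp, hq, mul_add]
  | mul_X p w hp =>
    rcases eq_or_ne w v with rfl | hne
    · rw [map_mul, aeval_X, pderiv_mul, hp, hu, if_pos rfl, pderiv_mul, pderiv_X_self,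
        mul_one, map_add, map_mul, aeval_X]
      ring
    · rw [map_mul, aeval_X, pderiv_mul, hp, hu, if_neg hne, pderiv_mul,
        pderiv_X_of_ne hne]
      simp only [mul_zero, add_zero, map_mul, map_add, aeval_X, map_zero]
      ring

lemma pderiv_pderiv_comm (i j : σ) (p : MvPolynomial σ k) :
    pderiv i (pderiv j p) = pderiv j (pderiv i p) := by
  induction p using MvPolynomial.induction_on with
  | C a => simp [pderiv_C]
  | add p q hp hq => simp only [map_add, hp, hq]
  | mul_X p w hp =>
    simp only [pderiv_mul, map_add, pderiv_mul, hp]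
    have hx : ∀ a b : σ, pderiv a (pderiv b (X w) : MvPolynomial σ k) = 0 := by
      intro a b
      rcases eq_or_ne b w with rfl | hne
      · rw [pderiv_X_self, pderiv_one]
      · rw [pderiv_X_of_ne (fun h => hne h.symm), map_zero]
    rw [hx, hx]
    ring

lemma commute_pderiv (i j : σ) :
    Commute ((pderiv i).toLinearMap : Module.End k (MvPolynomial σ k))
      (pderiv j).toLinearMap := by
  apply LinearMap.ext
  intro p
  simp only [Module.End.mul_apply, Derivation.coeFn_coe]
  exact pderiv_pderiv_comm i j p

lemma commute_mulLeft_pderiv {r : MvPolynomial σ k} (i : σ) (hr : pderiv i r = 0) :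
    Commute (LinearMap.mulLeft k r : Module.End k (MvPolynomial σ k))
      (pderiv i).toLinearMap := by
  apply LinearMap.ext
  intro p
  show r * pderiv i p = pderiv i (r * p)
  rw [pderiv_mul, hr, zero_mul, zero_add]

end ChainRule

section Specific

variable {k : Type*} [CommSemiring k] {n : ℕ}

/-- opPow = opPowG -/
lemma opPow_eq_opPowG (op : σ → Module.End k (MvPolynomial σ k)) (m : σ →₀ ℕ) :
    opPow op m = opPowG op m := rfl

lemma apAct_eq_apActG (op : σ → Module.End k (MvPolynomial σ k)) (h F : MvPolynomial σ k) :
    apAct op h F = apActG op h F := rfl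

variable (k n)

/-- the substitution `t ↦ t`, `yᵢ ↦ t xᵢ + yᵢ` from `k[t,y]` to `k[t,x,y]`. -/
noncomputable def sjh : MvPolynomial (Option (Fin n)) k →ₐ[k]
    MvPolynomial (Option (Fin n ⊕ Fin n)) k :=
  aeval (fun w => Option.elim w (X none)
    (fun i => X none * X (some (Sum.inl i)) + X (some (Sum.inr i))))

/-- retraction of `sjh` -/
noncomputable def rjh : MvPolynomial (Option (Fin n ⊕ Fin n)) k →ₐ[k]
    MvPolynomial (Option (Fin n)) k :=
  aeval (fun w => Option.elim w (X none)
    (fun s => Sum.elim (fun _ => 0) (fun i => X (some i)) s))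

lemma rjh_sjh (q : MvPolynomial (Option (Fin n)) k) : rjh k n (sjh k n q) = q := by
  have : (rjh k n).comp (sjh k n) = AlgHom.id k _ := by
    apply algHom_ext
    intro v
    cases v with
    | none => simp [sjh, rjh]
    | some i => simp [sjh, rjh]
  calc rjh k n (sjh k n q) = ((rjh k n).comp (sjh k n)) q := rfl
  _ = q := by rw [this]; rfl

lemma sjh_injective : Function.Injective (sjh k n) := by
  intro a b hab
  have := congrArg (rjh k n) hab
  rwa [rjh_sjh, rjh_sjh] at this

/-- the operators on `k[t,y]` matching `tOp` on `k[t,x,y]` through `sjh`. -/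
noncomputable def dOp : Option (Fin n ⊕ Fin n) →
    Module.End k (MvPolynomial (Option (Fin n)) k) := fun w =>
  Option.elim w (LinearMap.mulLeft k (X none))
    (fun s => Sum.elim
      (fun i => LinearMap.mulLeft k (X none) * (pderiv (some i)).toLinearMap)
      (fun i => (pderiv (some i)).toLinearMap) s)

variable {τ : Type*} [DecidableEq τ]

lemma commute_tOp (i j : Option τ) :
    Commute (tOp (k := k) i) (tOp (k := k) j) := by
  have hm : ∀ (v : τ), pderiv (R := k) (some v) (X (σ := Option τ) none) = 0 :=
    fun v => pderiv_X_of_ne (by simp)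
  cases i with
  | none => cases j with
    | none => exact Commute.refl _
    | some v => exact commute_mulLeft_pderiv (some v) (hm v)
  | some v => cases j with
    | none => exact (commute_mulLeft_pderiv (some v) (hm v)).symm
    | some w => exact commute_pderiv _ _

lemma commute_dOp (i j : Option (Fin n ⊕ Fin n)) :
    Commute (dOp k n i) (dOp k n j) := by
  have hm : ∀ (v : Fin n), pderiv (R := k) (some v) (X (σ := Option (Fin n)) none) = 0 :=
    fun v => pderiv_X_of_ne (by simp)
  have base : ∀ (i j : Option (Fin n)),
      Commute ((tOp (k := k) i : Module.End k (MvPolynomial (Option (Fin n)) k)))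
        (tOp (k := k) j) := commute_tOp k
  have key : ∀ (i j : Option (Fin n ⊕ Fin n)), ∃ u v : Option (Fin n),
      dOp k n i = tOp u * tOp v ∨ dOp k n i = tOp u := by
    intro i j
    cases i with
    | none => exact ⟨none, none, Or.inr rfl⟩
    | some s => cases s with
      | inl a => exact ⟨none, some a, Or.inl rfl⟩
      | inr a => exact ⟨some a, some a, Or.inr rfl⟩
  obtain ⟨u, v, h1⟩ := key i j
  obtain ⟨u', v', h2⟩ := key j i
  have : ∀ w, Commute (tOp (k := k) (τ := Fin n) w) (dOp k n j) := by
    intro w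
    rcases h2 with h2 | h2 <;> rw [h2]
    · exact (base w u').mul_right (base w v')
    · exact base w u'
  rcases h1 with h1 | h1 <;> rw [h1]
  · exact (this u).mul_left (this v)
  · exact this u

lemma commute_pdOp {σ : Type*} [DecidableEq σ] (i j : σ) :
    Commute ((pderiv i).toLinearMap : Module.End k (MvPolynomial σ k))
      (pderiv j).toLinearMap := commute_pderiv i j

lemma tOp_sjh (v : Option (Fin n ⊕ Fin n)) (q : MvPolynomial (Option (Fin n)) k) :
    tOp v (sjh k n q) = sjh k n (dOp k n v q) := by
  cases v with
  | none =>
    show X none * (sjh k n q) = sjh k n (X none * q)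
    rw [map_mul]
    congr 1
    simp [sjh]
  | some s =>
    cases s with
    | inl i =>
      rw [show tOp (some (Sum.inl i)) (sjh k n q) = pderiv (some (Sum.inl i)) (sjh k n q) from rfl,
        show dOp k n (some (Sum.inl i)) q = X none * pderiv (some i) q from rfl]
      conv_lhs => rw [sjh]
      rw [pderiv_aeval_eq (v := some i) (c := X none), map_mul]
      · congr 1
        simp [sjh]
      · intro w
        cases w with
        | none => simp
        | some j =>
          rcases eq_or_ne j i with rfl | hne
          · simp [pderiv_X_of_ne]
          · simp only [Option.elim]
            rw [if_neg (by simpa using hne)]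
            rw [map_add, pderiv_mul, pderiv_X_of_ne (by simp),
              pderiv_X_of_ne (by simpa using hne),
              pderiv_X_of_ne (by simp)]
            simp
    | inr i =>
      rw [show tOp (some (Sum.inr i)) (sjh k n q) = pderiv (some (Sum.inr i)) (sjh k n q) from rfl,
        show dOp k n (some (Sum.inr i)) q = pderiv (some i) q from rfl]
      conv_lhs => rw [sjh]
      rw [pderiv_aeval_eq (v := some i) (c := 1), one_mul]
      rfl
      intro w
      cases w with
      | none => simp
      | some j =>
        rcases eq_or_ne j i with rfl | hne
        · simp only [Option.elim, if_pos rfl]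
          rw [map_add, pderiv_mul, pderiv_X_of_ne (by simp),
            pderiv_X_of_ne (by simp), pderiv_X_self]
          simp
        · simp only [Option.elim]
          rw [if_neg (by simpa using hne)]
          rw [map_add, pderiv_mul, pderiv_X_of_ne (by simp),
            pderiv_X_of_ne (by simp), pderiv_X_of_ne (by simpa using hne)]
          simp

end Specific

section Generic2

variable {k : Type*} [CommSemiring k] {σ : Type*}
variable {M : Type*} [AddCommMonoid M] [Module k M]

lemma apActG_smul (op : σ → Module.End k M) (a : k) (h : MvPolynomial σ k) (z : M) :
    apActG op (a • h) z = a • apActG op h z := by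
  classical
  rw [apActG_def, apActG_def, Finsupp.smul_sum]
  rw [AddMonoidAlgebra.coeff_smul, Finsupp.sum_smul_index (by intro m; rw [zero_smul])]
  apply Finsupp.sum_congr
  intro m _
  rw [smul_smul]

lemma apActG_zero_right (op : σ → Module.End k M) (hc : ∀ i j, Commute (op i) (op j))
    (h : MvPolynomial σ k) : apActG op h (0 : M) = 0 := by
  rw [apActG_eq op hc, map_zero]

variable {R' S' : Type*} [Semiring R'] [Semiring S'] [Module k R'] [Module k S']

/-- coefficientwise application of a linear map to a polynomial -/
noncomputable def polyMap (f : R' →ₗ[k] S') : Polynomial R' →ₗ[k] Polynomial S' where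
  toFun p := ⟨AddMonoidAlgebra.ofCoeff (Finsupp.mapRange f (map_zero f) p.toFinsupp.coeff)⟩
  map_add' p q := by
    apply Polynomial.ext
    intro e
    rw [Polynomial.coeff_add]
    show f ((p + q).coeff e) = f (p.coeff e) + f (q.coeff e)
    rw [Polynomial.coeff_add, map_add]
  map_smul' c p := by
    apply Polynomial.ext
    intro e
    rw [Polynomial.coeff_smul, RingHom.id_apply]
    show f ((c • p).coeff e) = c • f (p.coeff e)
    rw [Polynomial.coeff_smul, map_smul]

lemma polyMap_coeff (f : R' →ₗ[k] S') (p : Polynomial R') (e : ℕ) :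
    (polyMap f p).coeff e = f (p.coeff e) := rfl

lemma polyMap_monomial (f : R' →ₗ[k] S') (e : ℕ) (r : R') :
    polyMap f (Polynomial.monomial e r) = Polynomial.monomial e (f r) := by
  apply Polynomial.ext
  intro b
  rw [polyMap_coeff, Polynomial.coeff_monomial, Polynomial.coeff_monomial]
  split_ifs with hb
  · rfl
  · exact map_zero f

lemma X_pow_mul_C {A : Type*} [Semiring A] (e : ℕ) (r : A) :
    (Polynomial.X ^ e * Polynomial.C r) = Polynomial.monomial e r := by
  rw [Polynomial.X_pow_mul, Polynomial.C_mul_X_pow_eq_monomial]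

lemma polyMap_eq_zero_iff (f : R' →ₗ[k] S') (p : Polynomial R') :
    polyMap f p = 0 ↔ ∀ e, f (p.coeff e) = 0 := by
  rw [Polynomial.ext_iff]
  apply forall_congr'
  intro e
  rw [polyMap_coeff, Polynomial.coeff_zero]

end Generic2

section Specific2

variable {k : Type*} [CommSemiring k] {n : ℕ}
variable (k n)

lemma tAct_sjh (h : MvPolynomial (Option (Fin n ⊕ Fin n)) k)
    (q : MvPolynomial (Option (Fin n)) k) :
    tAct h (sjh k n q) = sjh k n (apActG (dOp k n) h q) := by
  rw [tAct, apAct_eq_apActG]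
  conv_lhs => rw [← rename_id_apply h]
  exact apActG_comp (dOp k n) tOp id (sjh k n).toLinearMap (commute_dOp k n) (commute_tOp k)
    (fun v z => tOp_sjh k n v z) h q

/-- `t ↦ t`, `xᵢ ↦ t yᵢ`, `yᵢ ↦ yᵢ` -/
noncomputable def rhoC : MvPolynomial (Option (Fin n ⊕ Fin n)) k →ₐ[k]
    MvPolynomial (Option (Fin n)) k :=
  aeval (fun w => Option.elim w (X none)
    (Sum.elim (fun i => X none * X (some i)) (fun i => X (some i))))

lemma opAlg_dOp (h : MvPolynomial (Option (Fin n ⊕ Fin n)) k) :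
    opAlgHomG (dOp k n) (commute_dOp k n) h
      = opAlgHomG tOp (commute_tOp k) (rhoC k n h) := by
  induction h using MvPolynomial.induction_on with
  | C a =>
    rw [← MvPolynomial.algebraMap_eq, AlgHom.commutes, AlgHom.commutes, AlgHom.commutes]
  | add p q hp hq => rw [map_add, map_add, map_add, hp, hq]
  | mul_X p v hp =>
    rw [map_mul, map_mul, map_mul, hp]
    congr 1
    cases v with
    | none =>
      rw [opAlgHomG_X]
      show dOp k n none = opAlgHomG tOp (commute_tOp k) (rhoC k n (X none))
      rw [show rhoC k n (X none) = X none from by simp [rhoC], opAlgHomG_X]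
      rfl
    | some s =>
      cases s with
      | inl i =>
        rw [opAlgHomG_X,
          show rhoC k n (X (some (Sum.inl i))) = X none * X (some i) from by simp [rhoC],
          map_mul, opAlgHomG_X, opAlgHomG_X]
        rfl
      | inr i =>
        rw [opAlgHomG_X,
          show rhoC k n (X (some (Sum.inr i))) = X (some i) from by simp [rhoC],
          opAlgHomG_X]
        rfl

lemma apActG_dOp_eq (h : MvPolynomial (Option (Fin n ⊕ Fin n)) k)
    (q : MvPolynomial (Option (Fin n)) k) :
    apActG (dOp k n) h q = apActG tOp (rhoC k n h) q := by
  rw [apActG_eq _ (commute_dOp k n), apActG_eq _ (commute_tOp k), opAlg_dOp]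

lemma E_rename (r : MvPolynomial (Fin n) k) :
    optionEquivLeft k (Fin n) (rename Option.some r) = Polynomial.C r := by
  induction r using MvPolynomial.induction_on with
  | C a => rw [rename_C, optionEquivLeft_C]
  | add p q hp hq => rw [map_add, map_add, hp, hq, map_add]
  | mul_X p i hp => rw [map_mul, rename_X, map_mul, hp, optionEquivLeft_X_some, ← map_mul]

lemma tOp_rename (i : Fin n) (r : MvPolynomial (Fin n) k) :
    tOp (some i) (rename Option.some r) = rename Option.some (pderiv i r) := by
  show pderiv (some i) (rename Option.some r) = rename Option.some (pderiv i r)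
  have hre : ∀ p : MvPolynomial (Fin n) k,
      rename (Option.some) p = aeval (fun j => (X (some j) : MvPolynomial (Option (Fin n)) k)) p := by
    intro p
    rw [← aeval_X_left_apply (rename Option.some p), aeval_rename]
    rfl
  rw [hre, hre, pderiv_aeval_eq (v := i) (c := 1), one_mul]
  intro w
  rcases eq_or_ne w i with rfl | hne
  · rw [if_pos rfl, pderiv_X_self]
  · rw [if_neg hne, pderiv_X_of_ne (by simpa using hne)]

/-- restriction of an exponent vector to the `some` variables -/
noncomputable def someSlice (m : Option (Fin n) →₀ ℕ) : Fin n →₀ ℕ :=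
  Finsupp.comapDomain some m ((Option.some_injective _).injOn)

lemma someSlice_apply (m : Option (Fin n) →₀ ℕ) (i : Fin n) :
    someSlice n m i = m (some i) := rfl

lemma slice_decomp (m : Option (Fin n) →₀ ℕ) :
    m = Finsupp.single none (m none) + Finsupp.mapDomain some (someSlice n m) := by
  ext w
  cases w with
  | none =>
    rw [Finsupp.add_apply, Finsupp.single_eq_same,
      Finsupp.mapDomain_notin_range _ _ (by simp), add_zero]
  | some i =>
    rw [Finsupp.add_apply, Finsupp.single_eq_of_ne (by simp),
      Finsupp.mapDomain_apply (Option.some_injective _), someSlice_apply, zero_add]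

lemma monomial_decomp (m : Option (Fin n) →₀ ℕ) (a : k) :
    (monomial m a : MvPolynomial (Option (Fin n)) k)
      = a • ((X none : MvPolynomial (Option (Fin n)) k) ^ (m none)
          * rename Option.some (monomial (someSlice n m) 1)) := by
  rw [rename_monomial, X_pow_eq_monomial, monomial_mul, mul_one,
    MvPolynomial.smul_monomial, smul_eq_mul, mul_one, ← slice_decomp]

noncomputable def pdOp : Fin n → Module.End k (MvPolynomial (Fin n) k) :=
  fun i => (pderiv i).toLinearMap

noncomputable def cFlin (F : MvPolynomial (Fin n) k) :
    MvPolynomial (Fin n) k →ₗ[k] MvPolynomial (Fin n) k where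
  toFun g := apActG (pdOp k n) g F
  map_add' g1 g2 := apActG_add _ _ _ _
  map_smul' a g := apActG_smul _ _ _ _

lemma coreA (F : MvPolynomial (Fin n) k) (q : MvPolynomial (Option (Fin n)) k) :
    optionEquivLeft k (Fin n) (apActG tOp q (rename Option.some F))
      = polyMap (cFlin k n F) (optionEquivLeft k (Fin n) q) := by
  induction q using MvPolynomial.induction_on' with
  | add p q hp hq => rw [apActG_add, map_add, map_add, map_add, hp, hq]
  | monomial m a =>
    have h1 : opAlgHomG tOp (commute_tOp k) (rename Option.some (monomial (someSlice n m) 1))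
        (rename Option.some F)
        = rename Option.some (apActG (pdOp k n) (monomial (someSlice n m) 1) F) := by
      rw [← apActG_eq _ (commute_tOp k)]
      exact apActG_comp (pdOp k n) tOp Option.some (rename Option.some).toLinearMap
        (commute_pdOp k) (commute_tOp k) (fun i z => tOp_rename k n i z) _ F
    have h2 : ∀ (w : MvPolynomial (Option (Fin n)) k) (e : ℕ),
        ((tOp (k := k) (τ := Fin n) none) ^ e) w = (X none) ^ e * w := by
      intro w e
      show ((LinearMap.mulLeft k (X none)) ^ e) w = _
      rw [LinearMap.pow_mulLeft, LinearMap.mulLeft_apply]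
    rw [monomial_decomp k n m a, apActG_smul, apActG_eq _ (commute_tOp k), map_mul, map_pow,
      opAlgHomG_X, Module.End.mul_apply, h1, h2, map_smul, map_mul, map_pow,
      optionEquivLeft_X_none, E_rename]
    rw [map_smul, map_mul, map_pow, optionEquivLeft_X_none, E_rename, map_smul]
    rw [X_pow_mul_C, X_pow_mul_C, polyMap_monomial]
    rfl

lemma claimA (F : MvPolynomial (Fin n) k) (q : MvPolynomial (Option (Fin n)) k) :
    apActG tOp q (rename Option.some F) = 0
      ↔ ∀ e : ℕ, apActG (pdOp k n) ((optionEquivLeft k (Fin n) q).coeff e) F = 0 := by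
  have hE : Function.Injective (optionEquivLeft k (Fin n)) :=
    (optionEquivLeft k (Fin n)).injective
  constructor
  · intro h e
    have h2 : polyMap (cFlin k n F) (optionEquivLeft k (Fin n) q) = 0 := by
      rw [← coreA, h, map_zero]
    exact (polyMap_eq_zero_iff _ _).mp h2 e
  · intro h
    apply hE
    rw [coreA, map_zero]
    exact (polyMap_eq_zero_iff _ _).mpr h

end Specific2

section Ring

variable {k : Type*} [CommRing k] {n : ℕ}
variable (k n)

/-- annihilator ideal of `F` under the apolarity action -/
noncomputable def KI (F : MvPolynomial (Fin n) k) : Ideal (MvPolynomial (Fin n) k) where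
  carrier := {g | apActG (pdOp k n) g F = 0}
  add_mem' := by
    intro a b ha hb
    simp only [Set.mem_setOf_eq] at *
    rw [apActG_add, ha, hb, add_zero]
  zero_mem' := by
    simp only [Set.mem_setOf_eq]
    rw [apActG_def]
    simp
  smul_mem' := by
    intro r g hg
    simp only [Set.mem_setOf_eq] at *
    rw [smul_eq_mul, apActG_mul (pdOp k n) (fun i j => commute_pdOp k i j), hg,
      apActG_zero_right (pdOp k n) (fun i j => commute_pdOp k i j)]

/-- the span form of the annihilator ideal -/
noncomputable def Kspan (F : MvPolynomial (Fin n) k) : Ideal (MvPolynomial (Fin n) k) :=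
  Ideal.span {h : MvPolynomial (Fin n) k | apContract h F = 0}

lemma Kspan_eq (F : MvPolynomial (Fin n) k) : Kspan k n F = KI k n F := by
  apply le_antisymm
  · rw [Kspan, Ideal.span_le]
    intro g hg
    exact (show apActG (pdOp k n) g F = 0 from hg)
  · intro g hg
    exact Ideal.subset_span (show apContract g F = 0 from hg)

lemma mem_Kspan (F g : MvPolynomial (Fin n) k) :
    g ∈ Kspan k n F ↔ apActG (pdOp k n) g F = 0 := by
  rw [Kspan_eq]
  exact Iff.rfl

lemma mk_smul (I : Ideal (MvPolynomial (Fin n) k)) (a : k) (x : MvPolynomial (Fin n) k) :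
    Ideal.Quotient.mk I (a • x) = a • Ideal.Quotient.mk I x :=
  map_smul (Ideal.Quotient.mkₐ k I) a x

/-- `Ψ` on `k[t,y]` -/
noncomputable def PsiC (F : MvPolynomial (Fin n) k) : MvPolynomial (Option (Fin n)) k →ₐ[k]
    TensorProduct k (Polynomial k) (MvPolynomial (Fin n) k ⧸ Kspan k n F) :=
  aeval (fun w => Option.elim w
    ((Polynomial.X : Polynomial k) ⊗ₜ[k] (1 : MvPolynomial (Fin n) k ⧸ Kspan k n F))
    (fun i => (1 : Polynomial k) ⊗ₜ[k] Ideal.Quotient.mk (Kspan k n F) (X i)))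

/-- `Ψ` on `k[t,x,y]` -/
noncomputable def PsiB (F : MvPolynomial (Fin n) k) :
    MvPolynomial (Option (Fin n ⊕ Fin n)) k →ₐ[k]
    TensorProduct k (Polynomial k) (MvPolynomial (Fin n) k ⧸ Kspan k n F) :=
  aeval (fun w => Option.elim w
    ((Polynomial.X : Polynomial k) ⊗ₜ[k] (1 : MvPolynomial (Fin n) k ⧸ Kspan k n F))
    (Sum.elim
      (fun i => (Polynomial.X : Polynomial k) ⊗ₜ[k] Ideal.Quotient.mk (Kspan k n F) (X i))
      (fun i => (1 : Polynomial k) ⊗ₜ[k] Ideal.Quotient.mk (Kspan k n F) (X i))))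

lemma PsiC_map_one (F : MvPolynomial (Fin n) k) : PsiC k n F 1 = 1 := (PsiC k n F).map_one

lemma PsiC_map_mul (F : MvPolynomial (Fin n) k) (x y : MvPolynomial (Option (Fin n)) k) :
    PsiC k n F (x * y) = PsiC k n F x * PsiC k n F y := (PsiC k n F).map_mul x y

lemma PsiC_map_pow (F : MvPolynomial (Fin n) k) (x : MvPolynomial (Option (Fin n)) k) (e : ℕ) :
    PsiC k n F (x ^ e) = PsiC k n F x ^ e := (PsiC k n F).map_pow x e

lemma PsiC_X_none (F : MvPolynomial (Fin n) k) :
    PsiC k n F (X none)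
      = (Polynomial.X : Polynomial k) ⊗ₜ[k] (1 : MvPolynomial (Fin n) k ⧸ Kspan k n F) := by
  rw [PsiC, aeval_X]
  rfl

lemma PsiC_X_some (F : MvPolynomial (Fin n) k) (i : Fin n) :
    PsiC k n F (X (some i))
      = (1 : Polynomial k) ⊗ₜ[k] Ideal.Quotient.mk (Kspan k n F) (X i) := by
  rw [PsiC, aeval_X]
  rfl

lemma PsiB_eq (F : MvPolynomial (Fin n) k) (h : MvPolynomial (Option (Fin n ⊕ Fin n)) k) :
    PsiB k n F h = PsiC k n F (rhoC k n h) := by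
  have hcomp : PsiB k n F = (PsiC k n F).comp (rhoC k n) := by
    apply algHom_ext
    intro v
    cases v with
    | none =>
      rw [AlgHom.comp_apply,
        show rhoC k n (X none) = X none from by rw [rhoC, aeval_X]; rfl,
        PsiC_X_none, PsiB, aeval_X]
      rfl
    | some s =>
      cases s with
      | inl i =>
        rw [AlgHom.comp_apply,
          show rhoC k n (X (some (Sum.inl i))) = X none * X (some i) from by
            rw [rhoC, aeval_X]; rfl,
          map_mul, PsiC_X_none, PsiC_X_some, Algebra.TensorProduct.tmul_mul_tmul,
          mul_one, one_mul, PsiB, aeval_X]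
        rfl
      | inr i =>
        rw [AlgHom.comp_apply,
          show rhoC k n (X (some (Sum.inr i))) = X (some i) from by
            rw [rhoC, aeval_X]; rfl,
          PsiC_X_some, PsiB, aeval_X]
        rfl
  rw [hcomp]
  rfl

lemma PsiC_rename (F r : MvPolynomial (Fin n) k) :
    PsiC k n F (rename Option.some r)
      = (1 : Polynomial k) ⊗ₜ[k] Ideal.Quotient.mk (Kspan k n F) r := by
  induction r using MvPolynomial.induction_on with
  | C a =>
    rw [rename_C,
      show (C a : MvPolynomial (Fin n) k) = a • 1 from by
        rw [← MvPolynomial.algebraMap_eq, Algebra.algebraMap_eq_smul_one],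
      show (C a : MvPolynomial (Option (Fin n)) k) = a • 1 from by
        rw [← MvPolynomial.algebraMap_eq, Algebra.algebraMap_eq_smul_one],
      (PsiC k n F).map_smul_of_tower, PsiC_map_one, mk_smul, map_one, TensorProduct.tmul_smul,
      ← Algebra.TensorProduct.one_def]
  | add p q hp hq => rw [map_add, map_add, hp, hq, map_add, TensorProduct.tmul_add]
  | mul_X p i hp =>
    rw [map_mul, rename_X, PsiC_map_mul, hp, PsiC_X_some,
      Algebra.TensorProduct.tmul_mul_tmul, mul_one, map_mul]

lemma E_monomial (m : Option (Fin n) →₀ ℕ) (a : k) :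
    optionEquivLeft k (Fin n) (monomial m a)
      = Polynomial.monomial (m none) (monomial (someSlice n m) a) := by
  rw [monomial_decomp k n m a, map_smul, map_mul, map_pow, optionEquivLeft_X_none, E_rename,
    X_pow_mul_C, Polynomial.smul_monomial, MvPolynomial.smul_monomial, smul_eq_mul, mul_one]

lemma PsiC_monomial (F : MvPolynomial (Fin n) k) (m : Option (Fin n) →₀ ℕ) (a : k) :
    PsiC k n F (monomial m a)
      = ((Polynomial.X : Polynomial k) ^ (m none))
          ⊗ₜ[k] Ideal.Quotient.mk (Kspan k n F) (monomial (someSlice n m) a) := by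
  rw [monomial_decomp k n m a, map_smul, PsiC_map_mul, PsiC_map_pow, PsiC_X_none,
    PsiC_rename,
    Algebra.TensorProduct.tmul_pow, one_pow, Algebra.TensorProduct.tmul_mul_tmul,
    mul_one, one_mul, ← TensorProduct.tmul_smul, ← mk_smul,
    MvPolynomial.smul_monomial, smul_eq_mul, mul_one]

/-- the comparison map to polynomials over the quotient -/
noncomputable def ThMap (F : MvPolynomial (Fin n) k) :
    TensorProduct k (Polynomial k) (MvPolynomial (Fin n) k ⧸ Kspan k n F) →ₗ[k]
      Polynomial (MvPolynomial (Fin n) k ⧸ Kspan k n F) :=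
  (LinearMap.restrictScalars k
      (polyEquivTensor k (MvPolynomial (Fin n) k ⧸ Kspan k n F)).symm.toLinearMap).comp
    (Algebra.TensorProduct.comm k (Polynomial k)
      (MvPolynomial (Fin n) k ⧸ Kspan k n F)).toLinearMap

lemma ThMap_injective (F : MvPolynomial (Fin n) k) : Function.Injective (ThMap k n F) := by
  intro x y hxy
  apply (Algebra.TensorProduct.comm k (Polynomial k)
    (MvPolynomial (Fin n) k ⧸ Kspan k n F)).injective
  exact (polyEquivTensor k (MvPolynomial (Fin n) k ⧸ Kspan k n F)).symm.injective hxy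

lemma ThMap_tmul (F : MvPolynomial (Fin n) k) (e : ℕ)
    (y : MvPolynomial (Fin n) k ⧸ Kspan k n F) :
    ThMap k n F (((Polynomial.X : Polynomial k) ^ e) ⊗ₜ[k] y) = Polynomial.monomial e y := by
  rw [ThMap]
  simp only [LinearMap.coe_comp, Function.comp_apply, AlgEquiv.toLinearMap_apply,
    LinearMap.coe_restrictScalars]
  rw [Algebra.TensorProduct.comm_tmul, polyEquivTensor_symm_apply_tmul,
    Polynomial.X_pow_eq_monomial, Polynomial.sum_monomial_index]
  · rw [map_one, mul_one]
  · rw [map_zero, mul_zero, Polynomial.monomial_zero_right]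

lemma claimB_key (F : MvPolynomial (Fin n) k) (q : MvPolynomial (Option (Fin n)) k) :
    ThMap k n F (PsiC k n F q)
      = polyMap (Ideal.Quotient.mkₐ k (Kspan k n F)).toLinearMap
          (optionEquivLeft k (Fin n) q) := by
  induction q using MvPolynomial.induction_on' with
  | add p q hp hq => rw [map_add, map_add, map_add, map_add, hp, hq]
  | monomial m a =>
    rw [PsiC_monomial, E_monomial, polyMap_monomial, ThMap_tmul]
    rfl

lemma claimB (F : MvPolynomial (Fin n) k) (q : MvPolynomial (Option (Fin n)) k) :
    PsiC k n F q = 0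
      ↔ ∀ e : ℕ, (optionEquivLeft k (Fin n) q).coeff e ∈ Kspan k n F := by
  constructor
  · intro h e
    have h0 : polyMap (Ideal.Quotient.mkₐ k (Kspan k n F)).toLinearMap
        (optionEquivLeft k (Fin n) q) = 0 := by
      rw [← claimB_key, h, map_zero]
    have := (polyMap_eq_zero_iff _ _).mp h0 e
    rwa [← Ideal.Quotient.eq_zero_iff_mem]
  · intro h
    apply ThMap_injective k n F
    rw [claimB_key, map_zero]
    exact (polyMap_eq_zero_iff _ _).mpr fun e => by
      have he := h e
      rw [← Ideal.Quotient.eq_zero_iff_mem] at he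
      exact he

end Ring

section Ring2

variable {k : Type*} [CommRing k] {n : ℕ}
variable (k n)

lemma G_eq (F : MvPolynomial (Fin n) k) :
    aeval (fun i : Fin n => (X none * X (some (Sum.inl i)) + X (some (Sum.inr i)) :
        MvPolynomial (Option (Fin n ⊕ Fin n)) k)) F
      = sjh k n (rename Option.some F) := by
  rw [sjh, aeval_rename]
  rfl

lemma main_iff (F : MvPolynomial (Fin n) k) (h : MvPolynomial (Option (Fin n ⊕ Fin n)) k) :
    tAct h (aeval (fun i : Fin n =>
        (X none * X (some (Sum.inl i)) + X (some (Sum.inr i)) :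
          MvPolynomial (Option (Fin n ⊕ Fin n)) k)) F) = 0
      ↔ PsiB k n F h = 0 := by
  rw [G_eq, tAct_sjh]
  constructor
  · intro h0
    have h1 : apActG (dOp k n) h (rename Option.some F) = 0 := by
      apply sjh_injective k n
      rw [map_zero]
      exact h0
    rw [apActG_dOp_eq] at h1
    rw [PsiB_eq]
    exact (claimB k n F _).mpr (fun e => (mem_Kspan k n F _).mpr ((claimA k n F _).mp h1 e))
  · intro h0
    rw [PsiB_eq] at h0
    have h1 : apActG tOp (rhoC k n h) (rename Option.some F) = 0 :=
      (claimA k n F _).mpr fun e => (mem_Kspan k n F _).mp ((claimB k n F _).mp h0 e)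
    rw [← apActG_dOp_eq] at h1
    rw [h1, map_zero]

lemma PsiB_X_none (F : MvPolynomial (Fin n) k) :
    PsiB k n F (X none) = (Polynomial.X : Polynomial k)
      ⊗ₜ[k] (1 : MvPolynomial (Fin n) k ⧸ Kspan k n F) := by
  rw [PsiB, aeval_X]
  rfl

lemma PsiB_aeval_t (F : MvPolynomial (Fin n) k) (p : Polynomial k) :
    PsiB k n F (Polynomial.aeval (X none : MvPolynomial (Option (Fin n ⊕ Fin n)) k) p)
      = p ⊗ₜ[k] (1 : MvPolynomial (Fin n) k ⧸ Kspan k n F) := by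
  rw [show PsiB k n F ((Polynomial.aeval (X none : MvPolynomial (Option (Fin n ⊕ Fin n)) k)) p)
      = Polynomial.aeval (PsiB k n F (X none)) p from
    (Polynomial.aeval_algHom_apply (PsiB k n F) _ p).symm, PsiB_X_none]
  have h2 : (Polynomial.aeval ((Polynomial.X : Polynomial k)
        ⊗ₜ[k] (1 : MvPolynomial (Fin n) k ⧸ Kspan k n F)) :
      Polynomial k →ₐ[k] TensorProduct k (Polynomial k)
        (MvPolynomial (Fin n) k ⧸ Kspan k n F))
      = (Algebra.TensorProduct.includeLeft :
          Polynomial k →ₐ[k] TensorProduct k (Polynomial k)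
            (MvPolynomial (Fin n) k ⧸ Kspan k n F)) := by
    apply Polynomial.algHom_ext
    rw [Polynomial.aeval_X, Algebra.TensorProduct.includeLeft_apply]
  calc (Polynomial.aeval ((Polynomial.X : Polynomial k)
        ⊗ₜ[k] (1 : MvPolynomial (Fin n) k ⧸ Kspan k n F))) p
      = (Algebra.TensorProduct.includeLeft :
          Polynomial k →ₐ[k] TensorProduct k (Polynomial k)
            (MvPolynomial (Fin n) k ⧸ Kspan k n F)) p := by rw [h2]
    _ = p ⊗ₜ[k] 1 := Algebra.TensorProduct.includeLeft_apply p

lemma PsiB_rename_inr (F r : MvPolynomial (Fin n) k) :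
    PsiB k n F (rename (fun i => some (Sum.inr i)) r)
      = (1 : Polynomial k) ⊗ₜ[k] Ideal.Quotient.mk (Kspan k n F) r := by
  rw [PsiB_eq,
    show rhoC k n (rename (fun i => some (Sum.inr i)) r) = rename Option.some r from by
      rw [rhoC, aeval_rename, ← aeval_X_left_apply (rename Option.some r), aeval_rename]; rfl,
    PsiC_rename]

lemma PsiB_surjective (F : MvPolynomial (Fin n) k) :
    Function.Surjective (PsiB k n F) := by
  intro z
  induction z using TensorProduct.induction_on with
  | zero => exact ⟨0, map_zero _⟩
  | tmul p m =>
    obtain ⟨r, rfl⟩ := Ideal.Quotient.mk_surjective m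
    refine ⟨Polynomial.aeval (X none : MvPolynomial (Option (Fin n ⊕ Fin n)) k) p
      * rename (fun i => some (Sum.inr i)) r, ?_⟩
    rw [map_mul, PsiB_aeval_t, PsiB_rename_inr, Algebra.TensorProduct.tmul_mul_tmul,
      mul_one, one_mul]
  | add x y hx hy =>
    obtain ⟨a, ha⟩ := hx
    obtain ⟨b, hb⟩ := hy
    exact ⟨a + b, by rw [map_add, ha, hb]⟩

end Ring2

end ApolarAux

open ApolarAux in
/-- The algebra `k[t,α,β]/F(t·x+y)^⊥` is a free module over `k[t]` (acting through the image
of `t`), being isomorphic to `k[t] ⊗_k (k[β]/F(y)^⊥)`. Notation as before: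
`k[t,α,β] = k[t,x,y] = MvPolynomial (Option (Fin n ⊕ Fin n)) k`, `t = X none`,
`α_i = x_i = X (some (Sum.inl i))`, `β_i = y_i = X (some (Sum.inr i))`, annihilators taken
for the relative apolarity action, and `k[β] = MvPolynomial (Fin n) k`. -/
theorem quotient_by_perp_shifted_free {k : Type*} [Field k] [CharZero k] {n : ℕ}
    (F : MvPolynomial (Fin n) k) (hF : F.IsHomogeneous 3) :
    letI B := MvPolynomial (Option (Fin n ⊕ Fin n)) k
    letI G : B := aeval (fun i : Fin n =>
      (X none * X (some (Sum.inl i)) + X (some (Sum.inr i)) : B)) F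
    letI J : Ideal B := Ideal.span {h : B | tAct h G = 0}
    letI : Algebra (Polynomial k) (B ⧸ J) :=
      (Polynomial.aeval (Ideal.Quotient.mk J (X none))).toRingHom.toAlgebra
    letI Kβ : Ideal (MvPolynomial (Fin n) k) :=
      Ideal.span {h : MvPolynomial (Fin n) k | apContract h F = 0}
    Module.Free (Polynomial k) (B ⧸ J)
      ∧ Nonempty ((B ⧸ J) ≃ₐ[Polynomial k]
          TensorProduct k (Polynomial k) (MvPolynomial (Fin n) k ⧸ Kβ)) := by
  set G : MvPolynomial (Option (Fin n ⊕ Fin n)) k := aeval (fun i : Fin n =>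
    (X none * X (some (Sum.inl i)) + X (some (Sum.inr i)) :
      MvPolynomial (Option (Fin n ⊕ Fin n)) k)) F with hG
  set J : Ideal (MvPolynomial (Option (Fin n ⊕ Fin n)) k) :=
    Ideal.span {h : MvPolynomial (Option (Fin n ⊕ Fin n)) k | tAct h G = 0} with hJ
  set Kβ : Ideal (MvPolynomial (Fin n) k) :=
    Ideal.span {h : MvPolynomial (Fin n) k | apContract h F = 0} with hK
  letI instA : Algebra (Polynomial k) (MvPolynomial (Option (Fin n ⊕ Fin n)) k ⧸ J) :=
    (Polynomial.aeval (Ideal.Quotient.mk J (X none))).toRingHom.toAlgebra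
  have hmem : ∀ h : MvPolynomial (Option (Fin n ⊕ Fin n)) k,
      (tAct h G = 0) ↔ PsiB k n F h = 0 := fun h => main_iff k n F h
  have hJle : ∀ a ∈ J, PsiB k n F a = 0 := by
    have hle : J ≤ RingHom.ker (PsiB k n F).toRingHom := by
      rw [hJ, Ideal.span_le]
      intro g hg
      exact RingHom.mem_ker.mpr ((hmem g).mp hg)
    intro a ha
    exact RingHom.mem_ker.mp (hle ha)
  set q := Ideal.Quotient.liftₐ J (PsiB k n F) hJle with hqdef
  have hq : ∀ b : MvPolynomial (Option (Fin n ⊕ Fin n)) k,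
      q (Ideal.Quotient.mk J b) = PsiB k n F b := by
    intro b
    rw [hqdef, Ideal.Quotient.liftₐ_apply]
    exact Ideal.Quotient.lift_mk _ _ _
  have hinj : Function.Injective q := by
    rw [injective_iff_map_eq_zero]
    intro a ha
    obtain ⟨b, rfl⟩ := Ideal.Quotient.mk_surjective a
    rw [hq] at ha
    rw [Ideal.Quotient.eq_zero_iff_mem]
    exact Ideal.subset_span ((hmem b).mpr ha)
  have hsurj : Function.Surjective q := by
    intro z
    obtain ⟨b, hb⟩ := PsiB_surjective k n F z
    exact ⟨Ideal.Quotient.mk J b, by rw [hq, hb]⟩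
  set e := AlgEquiv.ofBijective q ⟨hinj, hsurj⟩ with hedef
  have he_mk : ∀ b : MvPolynomial (Option (Fin n ⊕ Fin n)) k,
      e (Ideal.Quotient.mk J b) = PsiB k n F b := hq
  have halg : ∀ p : Polynomial k,
      e (algebraMap (Polynomial k) (MvPolynomial (Option (Fin n ⊕ Fin n)) k ⧸ J) p)
        = @algebraMap (Polynomial k)
            (TensorProduct k (Polynomial k) (MvPolynomial (Fin n) k ⧸ Kβ)) _
            Algebra.TensorProduct.instSemiring Algebra.TensorProduct.leftAlgebra p := by
    intro p
    have h1 : algebraMap (Polynomial k) (MvPolynomial (Option (Fin n ⊕ Fin n)) k ⧸ J) p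
        = Polynomial.aeval (Ideal.Quotient.mk J (X none)) p := rfl
    rw [h1,
      show e ((Polynomial.aeval (Ideal.Quotient.mk J (X none))) p)
          = Polynomial.aeval (e (Ideal.Quotient.mk J (X none))) p from
        (Polynomial.aeval_algHom_apply e.toAlgHom _ p).symm,
      he_mk, PsiB_X_none]
    have h2 : (Polynomial.aeval ((Polynomial.X : Polynomial k)
          ⊗ₜ[k] (1 : MvPolynomial (Fin n) k ⧸ Kspan k n F)) :
        Polynomial k →ₐ[k] TensorProduct k (Polynomial k)
          (MvPolynomial (Fin n) k ⧸ Kspan k n F))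
        = (Algebra.TensorProduct.includeLeft :
            Polynomial k →ₐ[k] TensorProduct k (Polynomial k)
              (MvPolynomial (Fin n) k ⧸ Kspan k n F)) := by
      apply Polynomial.algHom_ext
      rw [Polynomial.aeval_X, Algebra.TensorProduct.includeLeft_apply]
    calc (Polynomial.aeval ((Polynomial.X : Polynomial k)
          ⊗ₜ[k] (1 : MvPolynomial (Fin n) k ⧸ Kspan k n F))) p
        = (Algebra.TensorProduct.includeLeft :
            Polynomial k →ₐ[k] TensorProduct k (Polynomial k)
              (MvPolynomial (Fin n) k ⧸ Kspan k n F)) p := by rw [h2]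
      _ = p ⊗ₜ[k] 1 := Algebra.TensorProduct.includeLeft_apply p
      _ = (show TensorProduct k (Polynomial k) (MvPolynomial (Fin n) k ⧸ Kspan k n F) from
            @algebraMap (Polynomial k)
            (TensorProduct k (Polynomial k) (MvPolynomial (Fin n) k ⧸ Kβ)) _
            Algebra.TensorProduct.instSemiring Algebra.TensorProduct.leftAlgebra p) := by
          rfl
  set eP : (MvPolynomial (Option (Fin n ⊕ Fin n)) k ⧸ J) ≃ₐ[Polynomial k]
      TensorProduct k (Polynomial k) (MvPolynomial (Fin n) k ⧸ Kβ) :=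
    AlgEquiv.ofRingEquiv (f := e.toRingEquiv) halg with hePdef
  haveI hfree : Module.Free (Polynomial k)
      (TensorProduct k (Polynomial k) (MvPolynomial (Fin n) k ⧸ Kβ)) :=
    Module.Free.of_basis
      ((Module.Free.chooseBasis k (MvPolynomial (Fin n) k ⧸ Kβ)).baseChange (Polynomial k))
  exact ⟨Module.Free.of_equiv eP.symm.toLinearEquiv, ⟨eP⟩⟩
end

section
/- Let I ⊆ S = k[α_1,...,α_6] be a homogeneous ideal such that S/I has Hilbert function (1, 6, 6) (i.e., (S/I)_0 = k, dim (S/I)_1 = dim (S/I)_2 = 6, (S/I)_n = 0 for n ≥ 3) and I is generated by elements of degree ≤ 3. Then every homogeneous S-module homomorphism δ : I → S/I of positive degree (i.e., δ(I_n) ⊆ (S/I)_{n+d} for some d ≥ 1) is zero. -/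
open MvPolynomial

private lemma deg_one_single {σ : Type*} [DecidableEq σ] (d : σ →₀ ℕ) (h : d.degree = 1) :
    ∃ i, d = Finsupp.single i 1 := by
  have hc : d.toMultiset.card = 1 := by rw [Finsupp.card_toMultiset]; exact h
  obtain ⟨i, hi⟩ := Multiset.card_eq_one.mp hc
  refine ⟨i, ?_⟩
  have := congrArg Multiset.toFinsupp hi
  rwa [Finsupp.toMultiset_toFinsupp, Multiset.toFinsupp_singleton] at this

private lemma homSub_le_span {k : Type*} [Field k] :
    homogeneousSubmodule (Fin 6) k 1 ≤ Submodule.span k (Set.range X) := by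
  intro p hp
  rw [mem_homogeneousSubmodule] at hp
  rw [p.as_sum]
  apply Submodule.sum_mem
  intro d hd
  have hdeg : d.degree = 1 := by
    rw [Finsupp.degree_eq_weight_one]; exact hp (mem_support_iff.mp hd)
  obtain ⟨i, rfl⟩ := deg_one_single d hdeg
  have : (monomial (Finsupp.single i 1)) (coeff (Finsupp.single i 1) p)
      = coeff (Finsupp.single i 1) p • X i := by
    rw [X, smul_monomial, smul_eq_mul, mul_one]
  rw [this]
  exact Submodule.smul_mem _ _ (Submodule.subset_span ⟨i, rfl⟩)

private lemma homSub_findim {k : Type*} [Field k] (n : ℕ) :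
    FiniteDimensional k (homogeneousSubmodule (Fin 6) k n) := by
  apply Submodule.finiteDimensional_of_le (S₂ := restrictTotalDegree (Fin 6) k n)
  intro p hp
  rw [mem_restrictTotalDegree]
  exact ((mem_homogeneousSubmodule n p).mp hp).totalDegree_le

private lemma homSub1_finrank_le {k : Type*} [Field k] :
    Module.finrank k (homogeneousSubmodule (Fin 6) k 1) ≤ 6 := by
  classical
  have hfin : FiniteDimensional k (Submodule.span k (Set.range (X : Fin 6 → MvPolynomial (Fin 6) k))) :=
    FiniteDimensional.span_of_finite k (Set.finite_range X)
  have h1 : Module.finrank k (Submodule.span k (Set.range (X : Fin 6 → MvPolynomial (Fin 6) k))) ≤ 6 := by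
    have h2 : Module.finrank k (Submodule.span k (Set.range (X : Fin 6 → MvPolynomial (Fin 6) k)))
        ≤ (Set.range (X : Fin 6 → MvPolynomial (Fin 6) k)).toFinset.card :=
      finrank_span_le_card _
    refine le_trans h2 ?_
    have h3 : (Set.range (X : Fin 6 → MvPolynomial (Fin 6) k)).toFinset
        ⊆ Finset.univ.image X := by
      intro x hx; simp at hx ⊢; obtain ⟨i, rfl⟩ := hx; exact ⟨i, rfl⟩
    calc (Set.range X).toFinset.card
        ≤ (Finset.univ.image (X : Fin 6 → MvPolynomial (Fin 6) k)).card :=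
          Finset.card_le_card h3
      _ ≤ (Finset.univ : Finset (Fin 6)).card := Finset.card_image_le
      _ = 6 := by simp
  exact le_trans (Submodule.finrank_mono homSub_le_span) h1

private lemma submodule_eq_bot_of_finrank_zero {k M : Type*} [Field k] [AddCommGroup M]
    [Module k M] (p : Submodule k M) [FiniteDimensional k p]
    (h : Module.finrank k p = 0) : p = ⊥ := by
  rw [eq_bot_iff]
  intro x hx
  obtain ⟨a, ha, hax⟩ := Module.finrank_eq_zero_iff.mp h ⟨x, hx⟩
  have hax' : a • x = 0 := congrArg Subtype.val hax
  rw [Submodule.mem_bot]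
  exact (smul_eq_zero.mp hax').resolve_left ha

/-- Let `I ⊆ S = k[α_1,…,α_6]` be a homogeneous ideal such that `S/I` has Hilbert function
`(1,6,6)` and `I` is generated in degrees `≤ 3`. Then every homogeneous `S`-module
homomorphism `δ : I → S/I` of positive degree is zero. The `n`-th graded piece of `S/I` is
realised as the image of the homogeneous polynomials of degree `n`. -/
theorem positive_degree_hom_vanishes {k : Type*} [Field k]
    (I : Ideal (MvPolynomial (Fin 6) k))
    (hhom : ∀ f ∈ I, ∀ n : ℕ, homogeneousComponent n f ∈ I)
    (W : ℕ → Submodule k (MvPolynomial (Fin 6) k ⧸ I))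
    (hW : W = fun d => Submodule.map (Ideal.Quotient.mkₐ k I).toLinearMap
      (homogeneousSubmodule (Fin 6) k d))
    (h0 : Module.finrank k (W 0) = 1)
    (h1 : Module.finrank k (W 1) = 6)
    (h2 : Module.finrank k (W 2) = 6)
    (h3 : ∀ n, 3 ≤ n → Module.finrank k (W n) = 0)
    (hgen : ∃ G : Set (MvPolynomial (Fin 6) k),
      (∀ g ∈ G, g.totalDegree ≤ 3) ∧ I = Ideal.span G)
    (δ : I →ₗ[MvPolynomial (Fin 6) k] (MvPolynomial (Fin 6) k ⧸ I))
    (d : ℕ) (hd : 1 ≤ d)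
    (hdeg : ∀ (n : ℕ) (f : MvPolynomial (Fin 6) k) (hf : f ∈ I),
      f ∈ homogeneousSubmodule (Fin 6) k n → δ ⟨f, hf⟩ ∈ W (n + d)) :
    δ = 0 := by
  have hfd := fun n => homSub_findim (k := k) n
  set q := (Ideal.Quotient.mkₐ k I).toLinearMap with hq
  -- each W n is finite dimensional
  have hWfin : ∀ n, FiniteDimensional k (W n) := by
    intro n; rw [hW]; exact Module.Finite.map _ _
  -- W n = ⊥ for n ≥ 3
  have hWbot : ∀ n, 3 ≤ n → W n = ⊥ := by
    intro n hn
    have := hWfin n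
    exact submodule_eq_bot_of_finrank_zero _ (h3 n hn)
  -- I contains no nonzero homogeneous element of degree 0
  have hI0 : ∀ g ∈ I, g ∈ homogeneousSubmodule (Fin 6) k 0 → g = 0 := by
    intro g hg hg0
    by_contra hne
    rw [mem_homogeneousSubmodule] at hg0
    have hc : coeff 0 g ≠ 0 := by
      intro hzero
      apply hne
      ext e
      rcases eq_or_ne e 0 with rfl | he
      · simpa using hzero
      · have hdeg : e.degree ≠ 0 := by
          rwa [Ne, Finsupp.degree_eq_zero_iff]
        simp [hg0.coeff_eq_zero hdeg]
    have hgC : g = C (coeff 0 g) := by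
      ext e
      rcases eq_or_ne e 0 with rfl | he
      · simp
      · have hdeg : e.degree ≠ 0 := by rwa [Ne, Finsupp.degree_eq_zero_iff]
        simp [hg0.coeff_eq_zero hdeg, coeff_C, he, Ne.symm he]
    obtain ⟨c, hc0, hgC'⟩ : ∃ c : k, c ≠ 0 ∧ g = C c := ⟨coeff 0 g, hc, hgC⟩
    have hone : (1 : MvPolynomial (Fin 6) k) ∈ I := by
      have hmul : C c⁻¹ * g ∈ I := I.mul_mem_left _ hg
      rwa [hgC', ← C_mul, inv_mul_cancel₀ hc0, C_1] at hmul
    have hIT : I = ⊤ := Ideal.eq_top_of_unit_mem I 1 1 hone (mul_one 1)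
    have hsub : Subsingleton (MvPolynomial (Fin 6) k ⧸ I) := by
      rw [Ideal.Quotient.subsingleton_iff]; exact hIT
    have : Subsingleton (W 0) := ⟨fun a b => Subtype.ext (Subsingleton.elim _ _)⟩
    rw [Module.finrank_zero_of_subsingleton] at h0
    exact one_ne_zero h0.symm
  -- I contains no nonzero homogeneous element of degree 1
  have hI1 : ∀ g ∈ I, g ∈ homogeneousSubmodule (Fin 6) k 1 → g = 0 := by
    intro g hg hg1
    set f := q ∘ₗ (homogeneousSubmodule (Fin 6) k 1).subtype with hf
    have hrange : LinearMap.range f = W 1 := by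
      rw [hf, LinearMap.range_comp, Submodule.range_subtype, hW]
    have hrn := LinearMap.finrank_range_add_finrank_ker f
    rw [hrange, h1] at hrn
    have hker : Module.finrank k (LinearMap.ker f) = 0 := by
      have := homSub1_finrank_le (k := k)
      omega
    have hkerbot : LinearMap.ker f = ⊥ :=
      submodule_eq_bot_of_finrank_zero _ hker
    have hmem : (⟨g, hg1⟩ : homogeneousSubmodule (Fin 6) k 1) ∈ LinearMap.ker f := by
      rw [LinearMap.mem_ker]
      show q g = 0
      exact (Ideal.Quotient.eq_zero_iff_mem).mpr hg
    rw [hkerbot, Submodule.mem_bot] at hmem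
    exact congrArg Subtype.val hmem
  -- delta vanishes on homogeneous elements
  have key : ∀ (n : ℕ) (g : MvPolynomial (Fin 6) k) (hg : g ∈ I),
      g ∈ homogeneousSubmodule (Fin 6) k n → δ ⟨g, hg⟩ = 0 := by
    intro n g hg hgn
    rcases lt_or_ge n 2 with hn | hn
    · interval_cases n
      · have : g = 0 := hI0 g hg hgn
        have hz : (⟨g, hg⟩ : I) = 0 := Subtype.ext this
        rw [hz, map_zero]
      · have : g = 0 := hI1 g hg hgn
        have hz : (⟨g, hg⟩ : I) = 0 := Subtype.ext this
        rw [hz, map_zero]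
    · have := hdeg n g hg hgn
      rw [hWbot (n + d) (by omega)] at this
      exact (Submodule.mem_bot k).mp this
  ext ⟨f, hf⟩
  have hsum : (⟨f, hf⟩ : I)
      = ∑ i ∈ Finset.range (f.totalDegree + 1), ⟨homogeneousComponent i f, hhom f hf i⟩ := by
    apply Subtype.ext
    push_cast
    exact (sum_homogeneousComponent f).symm
  rw [hsum, map_sum]
  simp only [LinearMap.zero_apply]
  apply Finset.sum_eq_zero
  intro i _
  exact key i _ _ (homogeneousComponent_mem i f)
end

section
/- Let I ⊆ S = k[α_1,...,α_n] be an ideal and δ ∈ Hom_S(I, S/I). Then the set I' = { f − ε·δ(f) : f ∈ I } generates an ideal of S[ε] = S ⊗_k k[ε]/(ε²) such that S[ε]/I' is a flat k[ε]/(ε²)-module whose reduction modulo ε is S/I, provided S/I has finite k-dimension. -/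
open MvPolynomial

set_option synthInstance.maxHeartbeats 4000000
set_option maxHeartbeats 4000000

attribute [-instance] Ideal.Quotient.commSemiring


namespace TVaux

variable {k : Type*} [Field k]

local notation "Rk" => Polynomial k ⧸ Ideal.span {(Polynomial.X : Polynomial k) ^ 2}

lemma coeff1_span (p : Polynomial k) (hp : p ∈ Ideal.span {(Polynomial.X : Polynomial k) ^ 2}) :
    p.coeff 1 = 0 := by
  rw [Ideal.mem_span_singleton] at hp
  obtain ⟨q, rfl⟩ := hp
  rw [show (Polynomial.X : Polynomial k)^2 * q = Polynomial.X * (Polynomial.X * q) by ring, Polynomial.coeff_X_mul,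
    Polynomial.coeff_zero_eq_eval_zero]
  simp

noncomputable def ev0 : Rk →+* k :=
  Ideal.Quotient.lift _ (Polynomial.evalRingHom 0) (by
    intro p hp
    rw [Ideal.mem_span_singleton] at hp
    obtain ⟨q, rfl⟩ := hp
    simp)

@[simp] lemma ev0_mk (p : Polynomial k) :
    ev0 (Ideal.Quotient.mk _ p) = p.eval 0 := rfl

@[simp] lemma ev0_algebraMap (c : k) : ev0 (algebraMap k Rk c) = c := by
  have : algebraMap k Rk c = Ideal.Quotient.mk _ (Polynomial.C c) := rfl
  rw [this, ev0_mk]; simp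

@[simp] lemma ev0_eps : ev0 (Ideal.Quotient.mk _ (Polynomial.X : Polynomial k)) = 0 := by
  rw [ev0_mk]; simp

lemma eps_sq : (Ideal.Quotient.mk _ (Polynomial.X : Polynomial k)) * (Ideal.Quotient.mk _ Polynomial.X) = (0 : Rk) := by
  rw [← map_mul, Ideal.Quotient.eq_zero_iff_mem, ← pow_two]
  exact Ideal.subset_span rfl

lemma eps_mul_algebraMap_eq_zero {c : k}
    (h : (Ideal.Quotient.mk _ (Polynomial.X : Polynomial k)) * algebraMap k Rk c = 0) : c = 0 := by
  have : (Ideal.Quotient.mk (Ideal.span {(Polynomial.X : Polynomial k)^2}) (Polynomial.X * Polynomial.C c)) = 0 := by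
    rw [map_mul]; exact h
  rw [Ideal.Quotient.eq_zero_iff_mem] at this
  have := coeff1_span _ this
  simpa using this

lemma R_decomp (r : Rk) :
    ∃ a b : k, r = algebraMap k Rk a + (Ideal.Quotient.mk _ (Polynomial.X : Polynomial k)) * algebraMap k Rk b := by
  obtain ⟨p, rfl⟩ := Ideal.Quotient.mk_surjective r
  have hmon : (Polynomial.X^2 : Polynomial k).Monic := Polynomial.monic_X_pow 2
  have hmod : Ideal.Quotient.mk (Ideal.span {(Polynomial.X : Polynomial k)^2}) p
      = Ideal.Quotient.mk _ (p %ₘ Polynomial.X^2) := by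
    rw [Ideal.Quotient.mk_eq_mk_iff_sub_mem]
    have := Polynomial.modByMonic_add_div p (Polynomial.X^2)
    rw [Ideal.mem_span_singleton]
    exact ⟨p /ₘ Polynomial.X^2, by linear_combination -this⟩
  have hdeg : (p %ₘ Polynomial.X^2).degree ≤ 1 := by
    have := Polynomial.degree_modByMonic_lt p hmon
    rw [Polynomial.degree_X_pow] at this
    exact Order.le_of_lt_succ (by exact_mod_cast this)
  refine ⟨(p %ₘ Polynomial.X^2).coeff 0, (p %ₘ Polynomial.X^2).coeff 1, ?_⟩
  rw [hmod]
  conv_lhs => rw [Polynomial.eq_X_add_C_of_degree_le_one hdeg]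
  have ha : ∀ c : k, algebraMap k Rk c = Ideal.Quotient.mk _ (Polynomial.C c) := fun _ => rfl
  rw [map_add, map_mul, ha, ha]
  ring

lemma R_eps_decomp {r : Rk} (h : ev0 r = 0) :
    ∃ c : k, r = (Ideal.Quotient.mk _ (Polynomial.X : Polynomial k)) * algebraMap k Rk c := by
  obtain ⟨a, b, rfl⟩ := R_decomp r
  have : a = 0 := by
    have h2 : ev0 (algebraMap k Rk a + (Ideal.Quotient.mk _ (Polynomial.X : Polynomial k)) * algebraMap k Rk b) = a := by
      rw [map_add, map_mul]; simp
    rw [h] at h2; exact h2.symm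
  exact ⟨b, by rw [this, map_zero, zero_add]⟩

end TVaux

namespace TVaux2

open TVaux

variable {k : Type*} [Field k] {n : ℕ}

local notation "Rk" => Polynomial k ⧸ Ideal.span {(Polynomial.X : Polynomial k) ^ 2}
local notation "εR" => (Ideal.Quotient.mk (Ideal.span {(Polynomial.X : Polynomial k) ^ 2}) Polynomial.X)

noncomputable def σR : MvPolynomial (Fin n) k →+* MvPolynomial (Fin n) Rk :=
  MvPolynomial.map (algebraMap k Rk)

noncomputable def πR : MvPolynomial (Fin n) Rk →+* MvPolynomial (Fin n) k :=
  MvPolynomial.map (ev0 : Rk →+* k)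

@[simp] lemma πR_σR (p : MvPolynomial (Fin n) k) : πR (σR p) = p := by
  rw [σR, πR, MvPolynomial.map_map]
  have : (ev0 : Rk →+* k).comp (algebraMap k Rk) = RingHom.id k := by
    ext c; simp
  rw [this, MvPolynomial.map_id]

@[simp] lemma πR_C_eps (g : MvPolynomial (Fin n) Rk) : πR (C εR * g) = 0 := by
  rw [map_mul, πR, MvPolynomial.map_C]
  simp

lemma SR_decomp (g : MvPolynomial (Fin n) Rk) :
    ∃ a b : MvPolynomial (Fin n) k, g = σR a + C εR * σR b := by
  induction g using MvPolynomial.induction_on with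
  | C r =>
      obtain ⟨a, b, rfl⟩ := R_decomp r
      exact ⟨C a, C b, by simp [σR, MvPolynomial.map_C]⟩
  | add p q hp hq =>
      obtain ⟨a, b, rfl⟩ := hp
      obtain ⟨c, d, rfl⟩ := hq
      exact ⟨a + c, b + d, by rw [map_add, map_add]; ring⟩
  | mul_X p i hp =>
      obtain ⟨a, b, rfl⟩ := hp
      refine ⟨a * X i, b * X i, ?_⟩
      rw [map_mul, map_mul, σR, MvPolynomial.map_X]
      ring

lemma eps_smul_eq_zero {b : MvPolynomial (Fin n) k} (h : C εR * σR b = 0) : b = 0 := by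
  ext m
  have := congrArg (MvPolynomial.coeff m) h
  rw [MvPolynomial.coeff_C_mul, σR, MvPolynomial.coeff_map, MvPolynomial.coeff_zero] at this
  simpa using eps_mul_algebraMap_eq_zero this

lemma SR_decomp_unique {a b a' b' : MvPolynomial (Fin n) k}
    (h : σR a + C εR * σR b = σR a' + C εR * σR b') : a = a' ∧ b = b' := by
  have ha : a = a' := by
    have := congrArg πR h
    simpa using this
  subst ha
  have hb : C εR * σR (b - b') = 0 := by
    rw [map_sub, mul_sub, add_left_cancel_iff.mp h, sub_self]
  exact ⟨rfl, sub_eq_zero.mp (eps_smul_eq_zero hb)⟩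


lemma key_prod (a b f l : MvPolynomial (Fin n) k) :
    ((σR a : MvPolynomial (Fin n) Rk) + C εR * σR b) * (σR f - C εR * σR l)
      = σR (a*f) + C εR * σR (b*f - a*l) := by
  have h2 : (C εR : MvPolynomial (Fin n) Rk) * C εR = 0 := by
    rw [← map_mul, TVaux.eps_sq, map_zero]
  simp only [map_mul, map_sub]
  linear_combination (-((σR b : MvPolynomial (Fin n) Rk) * σR l)) * h2

lemma torsion_core (I : Ideal (MvPolynomial (Fin n) k))
    (δ : I →ₗ[MvPolynomial (Fin n) k] (MvPolynomial (Fin n) k ⧸ I))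
    (L : I → MvPolynomial (Fin n) k)
    (hL : ∀ f : I, Ideal.Quotient.mk I (L f) = δ f)
    (I' : Ideal (MvPolynomial (Fin n) Rk))
    (hI' : I' = Ideal.span {g | ∃ f : I, g = σR (f : MvPolynomial (Fin n) k) - C εR * σR (L f)})
    (g : MvPolynomial (Fin n) Rk) (hg : C εR * g ∈ I') :
    ∃ h : MvPolynomial (Fin n) Rk, g - C εR * h ∈ I' := by
  classical
  obtain ⟨c, hsupp, hsum⟩ := Submodule.mem_span_set.mp (hI' ▸ hg)
  have hz : ∀ z ∈ c.support, ∃ f : I, z = σR (f : MvPolynomial (Fin n) k) - C εR * σR (L f) :=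
    fun z hzz => hsupp hzz
  choose! F hF using hz
  choose A B hAB using fun z => SR_decomp (c z)
  obtain ⟨g₀, g₁, hgd⟩ := SR_decomp g
  -- rewrite the sum
  have hsum2 : (σR 0 : MvPolynomial (Fin n) Rk) + C εR * σR g₀
      = σR (∑ z ∈ c.support, A z * (F z : MvPolynomial (Fin n) k))
        + C εR * σR (∑ z ∈ c.support, (B z * (F z : MvPolynomial (Fin n) k) - A z * L (F z))) := by
    have l1 : C εR * g = (σR 0 : MvPolynomial (Fin n) Rk) + C εR * σR g₀ := by
      rw [hgd]
      have h2 : (C εR : MvPolynomial (Fin n) Rk) * C εR = 0 := by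
        rw [← map_mul, TVaux.eps_sq, map_zero]
      rw [map_zero]
      linear_combination (σR g₁ : MvPolynomial (Fin n) Rk) * h2
    have l2 : C εR * g = ∑ z ∈ c.support,
        (σR (A z * (F z : MvPolynomial (Fin n) k))
          + C εR * σR (B z * (F z : MvPolynomial (Fin n) k) - A z * L (F z))) := by
      rw [← hsum, Finsupp.sum]
      refine Finset.sum_congr rfl (fun z hzz => ?_)
      have hz1 : c z • z = c z * (σR ((F z : MvPolynomial (Fin n) k)) - C εR * σR (L (F z))) := by
        rw [smul_eq_mul, ← hF z hzz]
      rw [hz1, hAB z]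
      exact key_prod (A z) (B z) ((F z : MvPolynomial (Fin n) k)) (L (F z))
    rw [← l1, l2, Finset.sum_add_distrib, ← map_sum, ← Finset.mul_sum, ← map_sum]
  obtain ⟨e1, e2⟩ := SR_decomp_unique hsum2
  -- e1 : 0 = ∑ A z * F z ;  e2 : g₀ = ∑ (B z * F z - A z * L (F z))
  have hALI : (∑ z ∈ c.support, A z * L (F z)) ∈ I := by
    have hIsum : (∑ z ∈ c.support, A z • (F z)) = (0 : I) := by
      apply Subtype.ext
      rw [Submodule.coe_sum, AddSubmonoid.coe_zero]
      simp only [SetLike.val_smul, smul_eq_mul]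
      exact e1.symm
    have hδ := congrArg δ hIsum
    rw [map_sum, map_zero] at hδ
    rw [← Ideal.Quotient.eq_zero_iff_mem, map_sum]
    calc ∑ z ∈ c.support, (Ideal.Quotient.mk I) (A z * L (F z))
        = ∑ z ∈ c.support, δ (A z • F z) := Finset.sum_congr rfl (fun z _ => by
            rw [map_mul, map_smul, ← hL]; rfl)
      _ = 0 := hδ
  have hg₀I : g₀ ∈ I := by
    rw [e2, Finset.sum_sub_distrib]
    exact Submodule.sub_mem _
      (Ideal.sum_mem _ fun z _ => Ideal.mul_mem_left _ _ (F z).2) hALI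
  refine ⟨σR (L ⟨g₀, hg₀I⟩) + σR g₁, ?_⟩
  have : g - C εR * (σR (L ⟨g₀, hg₀I⟩) + σR g₁)
      = σR ((⟨g₀, hg₀I⟩ : I) : MvPolynomial (Fin n) k) - C εR * σR (L ⟨g₀, hg₀I⟩) := by
    rw [hgd]; ring
  rw [hI', this]
  exact Ideal.subset_span ⟨⟨g₀, hg₀I⟩, rfl⟩

noncomputable def Phi (I : Ideal (MvPolynomial (Fin n) k)) :
    MvPolynomial (Fin n) Rk →ₐ[k] (MvPolynomial (Fin n) k ⧸ I) :=
  { toRingHom := (Ideal.Quotient.mk I).comp (πR : MvPolynomial (Fin n) Rk →+* MvPolynomial (Fin n) k)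
    commutes' := fun c => by
      show Ideal.Quotient.mk I (πR (C (algebraMap k Rk c))) = algebraMap k _ c
      rw [πR, MvPolynomial.map_C, TVaux.ev0_algebraMap]
      rfl }

@[simp] lemma Phi_apply (I : Ideal (MvPolynomial (Fin n) k)) (g : MvPolynomial (Fin n) Rk) :
    Phi I g = Ideal.Quotient.mk I (πR g) := rfl

lemma Phi_surjective (I : Ideal (MvPolynomial (Fin n) k)) :
    Function.Surjective (Phi I) := by
  intro y
  obtain ⟨p, rfl⟩ := Ideal.Quotient.mk_surjective y
  exact ⟨σR p, by rw [Phi_apply, πR_σR]⟩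

lemma Phi_ker (I : Ideal (MvPolynomial (Fin n) k))
    (L : I → MvPolynomial (Fin n) k)
    (I' : Ideal (MvPolynomial (Fin n) Rk))
    (hI' : I' = Ideal.span {g | ∃ f : I, g = σR (f : MvPolynomial (Fin n) k) - C εR * σR (L f)}) :
    RingHom.ker (Phi I) = I' ⊔ Ideal.span {(C εR : MvPolynomial (Fin n) Rk)} := by
  apply le_antisymm
  · intro g hg
    rw [RingHom.mem_ker, Phi_apply, Ideal.Quotient.eq_zero_iff_mem] at hg
    obtain ⟨a, b, hgd⟩ := SR_decomp g
    have ha : a = πR g := by rw [hgd]; simp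
    have hmem : a ∈ I := by rw [ha]; exact hg
    have h1 : σR a - C εR * σR (L ⟨a, hmem⟩) ∈ I' := by
      rw [hI']
      exact Ideal.subset_span ⟨⟨a, hmem⟩, rfl⟩
    have : g = (σR a - C εR * σR (L ⟨a, hmem⟩))
        + C εR * (σR (L ⟨a, hmem⟩) + σR b) := by
      rw [hgd]; ring
    rw [this]
    exact Ideal.add_mem _ (Ideal.mem_sup_left h1)
      (Ideal.mem_sup_right (Ideal.mul_mem_right _ _ (Ideal.subset_span rfl)))
  · apply sup_le
    · rw [hI', Ideal.span_le]
      rintro _ ⟨f, rfl⟩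
      rw [SetLike.mem_coe, RingHom.mem_ker, Phi_apply, map_sub, πR_σR, πR_C_eps,
        sub_zero, Ideal.Quotient.eq_zero_iff_mem]
      exact f.2
    · rw [Ideal.span_le]
      rintro _ rfl
      rw [SetLike.mem_coe, RingHom.mem_ker, Phi_apply]
      have : πR (C εR : MvPolynomial (Fin n) Rk) = 0 := by
        rw [πR, MvPolynomial.map_C]; simp
      rw [this, map_zero]

end TVaux2

open TVaux TVaux2

/-- Let `I ⊆ S = k[α_1,…,α_n]` be an ideal with `S/I` finite dimensional over `k`, and let
`δ ∈ Hom_S(I, S/I)`. Choose a lift `L` of `δ` to `S`. Then the ideal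
`I' = (f − ε·L(f) : f ∈ I)` of `S[ε] = S ⊗_k k[ε]/(ε²)` is such that `S[ε]/I'` is a flat
(equivalently, free) `k[ε]/(ε²)`-module whose reduction modulo `ε` is `S/I`. Here
`k[ε]/(ε²)` is realised as `k[T]/(T²)` with `ε` the class of `T`. -/
theorem tangent_vector_gives_flat_family {k : Type*} [Field k] {n : ℕ}
    (I : Ideal (MvPolynomial (Fin n) k))
    (hfin : FiniteDimensional k (MvPolynomial (Fin n) k ⧸ I))
    (δ : I →ₗ[MvPolynomial (Fin n) k] (MvPolynomial (Fin n) k ⧸ I))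
    (L : I → MvPolynomial (Fin n) k)
    (hL : ∀ f : I, Ideal.Quotient.mk I (L f) = δ f)
    (ε : Polynomial k ⧸ Ideal.span {(Polynomial.X : Polynomial k) ^ 2})
    (hε : ε = Ideal.Quotient.mk _ Polynomial.X)
    (I' : Ideal (MvPolynomial (Fin n)
      (Polynomial k ⧸ Ideal.span {(Polynomial.X : Polynomial k) ^ 2})))
    (hI' : I' = Ideal.span
      {g | ∃ f : I,
        g = MvPolynomial.map (algebraMap k _) (f : MvPolynomial (Fin n) k)
          - C ε * MvPolynomial.map (algebraMap k _) (L f)}) :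
    Module.Flat (Polynomial k ⧸ Ideal.span {(Polynomial.X : Polynomial k) ^ 2})
        (MvPolynomial (Fin n)
          (Polynomial k ⧸ Ideal.span {(Polynomial.X : Polynomial k) ^ 2}) ⧸ I')
      ∧ Nonempty ((MvPolynomial (Fin n)
            (Polynomial k ⧸ Ideal.span {(Polynomial.X : Polynomial k) ^ 2}) ⧸
              (I' ⊔ Ideal.span {(C ε : MvPolynomial (Fin n)
                (Polynomial k ⧸ Ideal.span {(Polynomial.X : Polynomial k) ^ 2}))}))
          ≃ₐ[k] (MvPolynomial (Fin n) k ⧸ I)) := by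
  classical
  subst hε
  -- notation
  set Rk := Polynomial k ⧸ Ideal.span {(Polynomial.X : Polynomial k) ^ 2} with hRk
  have hI'' : I' = Ideal.span
      {g | ∃ f : I, g = σR (f : MvPolynomial (Fin n) k)
        - C (Ideal.Quotient.mk (Ideal.span {(Polynomial.X : Polynomial k) ^ 2}) Polynomial.X)
          * σR (L f)} := hI'
  have hker : RingHom.ker (Phi I) = I' ⊔ Ideal.span
      {(C (Ideal.Quotient.mk (Ideal.span {(Polynomial.X : Polynomial k) ^ 2}) Polynomial.X)
        : MvPolynomial (Fin n) Rk)} :=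
    Phi_ker I L I' hI''
  have hsurj := Phi_surjective (n := n) I
  constructor
  · -- Flatness
    set SRq := MvPolynomial (Fin n) Rk ⧸ I' with hSRq
    have hle : ∀ a ∈ I', Phi I a = 0 := fun a ha => by
      rw [← RingHom.mem_ker, hker]; exact Ideal.mem_sup_left ha
    set Φb : SRq →ₐ[k] (MvPolynomial (Fin n) k ⧸ I) :=
      Ideal.Quotient.liftₐ I' (Phi I) hle with hΦb
    have hΦbmk : ∀ g, Φb (Ideal.Quotient.mk I' g) = Phi I g := fun g => by
      rw [hΦb, Ideal.Quotient.liftₐ_apply]; rfl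
    have halg : ∀ r : Rk, algebraMap Rk SRq r = Ideal.Quotient.mk I' (C r) := fun r => rfl
    have hsmul : ∀ (r : Rk) (g : MvPolynomial (Fin n) Rk),
        r • (Ideal.Quotient.mk I' g) = Ideal.Quotient.mk I' (C r * g) := fun r g => by
      rw [← MvPolynomial.smul_eq_C_mul]
      exact (Submodule.Quotient.mk_smul I' r g).symm
    have hsemi : ∀ (r : Rk) (x : SRq), Φb (r • x) = ev0 r • Φb x := by
      intro r x
      obtain ⟨g, rfl⟩ := Ideal.Quotient.mk_surjective x
      rw [hsmul, hΦbmk, hΦbmk, Phi_apply, Phi_apply]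
      rw [show πR (C r * g) = C (ev0 r) * πR g by rw [map_mul, πR, MvPolynomial.map_C]]
      rw [← MvPolynomial.smul_eq_C_mul]
      exact Submodule.Quotient.mk_smul I (ev0 r) (πR g)
    have hΦbsurj : Function.Surjective Φb := by
      intro y
      obtain ⟨g, hg⟩ := hsurj y
      exact ⟨Ideal.Quotient.mk I' g, by rw [hΦbmk, hg]⟩
    have hkerb : ∀ x : SRq, Φb x = 0 → ∃ y : SRq, x = (Ideal.Quotient.mk _ Polynomial.X : Rk) • y := by
      intro x hx
      obtain ⟨g, rfl⟩ := Ideal.Quotient.mk_surjective x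
      rw [hΦbmk] at hx
      have hx2 : g ∈ RingHom.ker (Phi I) := hx
      rw [hker] at hx2
      obtain ⟨i, hi, w, hw, rfl⟩ := Submodule.mem_sup.mp hx2
      obtain ⟨h, rfl⟩ := Ideal.mem_span_singleton.mp hw
      refine ⟨Ideal.Quotient.mk I' h, ?_⟩
      rw [hsmul, map_add, Ideal.Quotient.eq_zero_iff_mem.mpr hi, zero_add]
    have htor : ∀ x : SRq, (Ideal.Quotient.mk _ Polynomial.X : Rk) • x = 0 →
        ∃ y : SRq, x = (Ideal.Quotient.mk _ Polynomial.X : Rk) • y := by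
      intro x hx
      obtain ⟨g, rfl⟩ := Ideal.Quotient.mk_surjective x
      rw [hsmul] at hx
      obtain ⟨h, hh⟩ := torsion_core I δ L hL I' hI'' g (Ideal.Quotient.eq_zero_iff_mem.mp hx)
      refine ⟨Ideal.Quotient.mk I' h, ?_⟩
      rw [hsmul]
      exact (Ideal.Quotient.mk_eq_mk_iff_sub_mem _ _).mpr hh
    -- choose a basis of S/I and lift it
    let bI := Module.Free.chooseBasis k (MvPolynomial (Fin n) k ⧸ I)
    choose m hm using fun i => hΦbsurj (bI i)
    have hε2 : ((Ideal.Quotient.mk _ Polynomial.X : Rk) * Ideal.Quotient.mk _ Polynomial.X) = 0 :=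
      TVaux.eps_sq
    have hev0ε : ev0 (Ideal.Quotient.mk _ Polynomial.X : Rk) = 0 := TVaux.ev0_eps
    have hzs : ∀ x : SRq, (0 : Rk) • x = 0 := fun x => zero_smul Rk x
    have hzs' : ∀ y : MvPolynomial (Fin n) k ⧸ I, (0 : k) • y = 0 := fun y => zero_smul k y
    have hsmul2 : ∀ (a b : Rk) (x : SRq), a • b • x = (a * b) • x :=
      fun a b x => (mul_smul a b x).symm
    have hspan_aux : ∀ x : SRq, ∃ x' ∈ Submodule.span Rk (Set.range m),
        ∃ y : SRq, x = x' + (Ideal.Quotient.mk _ Polynomial.X : Rk) • y := by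
      intro x
      set u := Φb x with hu
      set x' : SRq := ∑ i, (algebraMap k Rk (bI.repr u i)) • m i with hx'
      have hΦbx' : Φb x' = u := by
        rw [hx', map_sum]
        calc ∑ i, Φb ((algebraMap k Rk (bI.repr u i)) • m i)
            = ∑ i, bI.repr u i • bI i := by
              refine Finset.sum_congr rfl fun i _ => ?_
              rw [hsemi, TVaux.ev0_algebraMap, hm]
          _ = u := bI.sum_repr u
      have hx'mem : x' ∈ Submodule.span Rk (Set.range m) := by
        rw [hx']
        exact Submodule.sum_mem _ fun i _ =>
          Submodule.smul_mem _ _ (Submodule.subset_span ⟨i, rfl⟩)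
      have h0 : Φb (x - x') = 0 := by rw [map_sub, hΦbx', hu, sub_self]
      obtain ⟨y, hy⟩ := hkerb _ h0
      exact ⟨x', hx'mem, y, by rw [← hy]; abel⟩
    have hspan : ⊤ ≤ Submodule.span Rk (Set.range m) := by
      intro x _
      obtain ⟨x', hx', y, hxy⟩ := hspan_aux x
      obtain ⟨y', hy', z, hyz⟩ := hspan_aux y
      have : x = x' + (Ideal.Quotient.mk _ Polynomial.X : Rk) • y' := by
        rw [hxy, hyz, smul_add, hsmul2, hε2, hzs, add_zero]
      rw [this]
      exact Submodule.add_mem _ hx' (Submodule.smul_mem _ _ hy')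
    have hli : LinearIndependent Rk m := by
      rw [linearIndependent_iff']
      intro s gc hsum0 i hi
      have h1 : ∑ j ∈ s, ev0 (gc j) • bI j = 0 := by
        have h := congrArg Φb hsum0
        rw [map_sum, map_zero] at h
        rw [← h]
        exact (Finset.sum_congr rfl fun j _ => by rw [hsemi, hm]).symm
      have h2 : ∀ j ∈ s, ev0 (gc j) = 0 :=
        linearIndependent_iff'.mp bI.linearIndependent s _ h1
      have h3 : ∀ j, ∃ cj : k, (if j ∈ s then gc j else 0)
          = (Ideal.Quotient.mk _ Polynomial.X : Rk) * algebraMap k Rk cj := by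
        intro j
        by_cases hj : j ∈ s
        · rw [if_pos hj]; exact TVaux.R_eps_decomp (h2 j hj)
        · exact ⟨0, by rw [if_neg hj, map_zero, mul_zero]⟩
      choose cf hcf using h3
      have h4 : (Ideal.Quotient.mk _ Polynomial.X : Rk) •
          (∑ j ∈ s, algebraMap k Rk (cf j) • m j) = 0 := by
        rw [Finset.smul_sum, ← hsum0]
        refine Finset.sum_congr rfl fun j hj => ?_
        rw [hsmul2, ← hcf j, if_pos hj]
      obtain ⟨y, hy⟩ := htor _ h4
      have h5 : ∑ j ∈ s, cf j • bI j = 0 := by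
        have h := congrArg Φb hy
        rw [hsemi, hev0ε, hzs', map_sum] at h
        rw [← h]
        exact (Finset.sum_congr rfl fun j _ => by
          rw [hsemi, TVaux.ev0_algebraMap, hm]).symm
      have h6 := linearIndependent_iff'.mp bI.linearIndependent s _ h5 i hi
      have h7 := hcf i
      rw [if_pos hi, h6, map_zero, mul_zero] at h7
      exact h7
    letI : Module.Free Rk SRq := Module.Free.of_basis (Module.Basis.mk hli hspan)
    exact Module.Flat.of_free (R := Rk) (M := SRq)
  · exact ⟨(Ideal.quotientEquivAlgOfEq k hker.symm).trans
      (Ideal.quotientKerAlgEquivOfSurjective hsurj)⟩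
end

section
/- Let C be a finite free k[t]-algebra of the form C = k[t, α_1,...,α_n]/H^⊥ for some H ∈ k[t, x_1,...,x_n], where H^⊥ is the kernel of the evaluation map ev_H : k[t, α] → k[t, x], and define Φ : C → Hom_{k[t]}(C, k[t]) by Φ(c)(d) = (ev_{c ∘ H}(d))(x = 0). Then Φ is injective. -/
open MvPolynomial

lemma coeff_pderiv' {k : Type*} [CommSemiring k] {σ : Type*} [DecidableEq σ]
    (i : σ) (ν : σ →₀ ℕ) (p : MvPolynomial σ k) :
    coeff ν (pderiv i p) = (ν i + 1 : ℕ) * coeff (ν + Finsupp.single i 1) p := by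
  induction p using MvPolynomial.induction_on' with
  | add p q hp hq => simp [map_add, coeff_add, hp, hq, mul_add]
  | monomial s a =>
    rw [pderiv_monomial, coeff_monomial, coeff_monomial]
    by_cases h2 : s = ν + Finsupp.single i 1
    · subst h2
      rw [if_pos (by simp), if_pos rfl]
      push_cast
      simp [mul_comm]
    · rw [if_neg h2, mul_zero]
      split_ifs with h1
      · rcases Nat.eq_zero_or_pos (s i) with hs | hs
        · simp [hs]
        · exfalso
          apply h2
          have : Finsupp.single i 1 ≤ s := by
            rw [Finsupp.single_le_iff]; exact hs
          rw [← h1, tsub_add_cancel_of_le this]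
      · rfl

lemma coeff_pderiv_pow' {k : Type*} [CommSemiring k] {σ : Type*} [DecidableEq σ]
    (i : σ) (e : ℕ) (ν : σ →₀ ℕ) (p : MvPolynomial σ k) :
    coeff ν (((pderiv i).toLinearMap ^ e) p) =
      ((∏ j ∈ Finset.range e, (ν i + 1 + j) : ℕ) : k) * coeff (ν + Finsupp.single i e) p := by
  induction e generalizing p with
  | zero => simp
  | succ e ih =>
    rw [pow_succ, Module.End.mul_apply, ih, Derivation.coeFn_coe, coeff_pderiv',
      Finset.prod_range_succ]
    have h1 : (ν + Finsupp.single i e) i + 1 = ν i + 1 + e := by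
      simp [Finsupp.add_apply, Finsupp.single_apply]; ring
    have h2 : ν + Finsupp.single i e + Finsupp.single i 1 = ν + Finsupp.single i (e + 1) := by
      rw [add_assoc, ← Finsupp.single_add]
    rw [h1, h2]
    push_cast
    ring

lemma coeff_foldr' {k : Type*} [CommSemiring k] {σ : Type*} [DecidableEq σ]
    (m : σ →₀ ℕ) (op : σ → Module.End k (MvPolynomial σ k)) :
    ∀ (l : List σ), l.Nodup → (∀ i ∈ l, op i = (pderiv i).toLinearMap) →
    ∀ (ν : σ →₀ ℕ), (∀ i ∈ l, ν i = 0) → ∀ p : MvPolynomial σ k,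
    coeff ν ((l.foldr (fun i L => (op i) ^ (m i) * L) 1) p) =
      (((l.map (fun i => (m i).factorial)).prod : ℕ) : k) *
        coeff (ν + (l.map (fun i => Finsupp.single i (m i))).sum) p := by
  intro l
  induction l with
  | nil => intro _ _ ν _ p; simp
  | cons i l ih =>
    intro hnd hop ν hν p
    rw [List.foldr_cons, hop i (by simp), Module.End.mul_apply, coeff_pderiv_pow',
      ih hnd.of_cons (fun j hj => hop j (List.mem_cons_of_mem _ hj))
        (ν + Finsupp.single i (m i))
        (fun j hj => by
          have hji : j ≠ i := fun h => (List.nodup_cons.mp hnd).1 (h ▸ hj)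
          simp [Finsupp.add_apply, Finsupp.single_apply, hji.symm, hν j (List.mem_cons_of_mem _ hj)])]
    have hνi : ν i = 0 := hν i List.mem_cons_self
    rw [List.map_cons, List.map_cons, List.prod_cons, List.sum_cons, add_assoc]
    have : ∏ j ∈ Finset.range (m i), (ν i + 1 + j) = (m i).factorial := by
      rw [← Finset.prod_range_add_one_eq_factorial]
      refine Finset.prod_congr rfl fun j _ => by omega
    rw [this]
    push_cast
    ring


lemma coeff_z' {k : Type*} [CommSemiring k] {τ : Type*}
    (p : MvPolynomial (Option τ) k) (a : ℕ) :
    (aeval (fun v : Option τ => v.elim Polynomial.X fun _ => 0) p).coeff a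
      = coeff (Finsupp.single none a) p := by
  classical
  induction p using MvPolynomial.induction_on' with
  | add p q hp hq => simp [map_add, coeff_add, hp, hq]
  | monomial s c =>
    rw [aeval_monomial, coeff_monomial]
    by_cases hs : ∃ v : τ, s (some v) ≠ 0
    · obtain ⟨v, hv⟩ := hs
      have hmem : (some v : Option τ) ∈ s.support := Finsupp.mem_support_iff.mpr hv
      rw [Finsupp.prod, Finset.prod_eq_zero hmem (by simp [zero_pow hv]), mul_zero,
        Polynomial.coeff_zero]
      rw [if_neg]
      intro h
      apply hv
      rw [h, Finsupp.single_apply]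
      simp
    · push_neg at hs
      have hseq : s = Finsupp.single none (s none) := by
        ext x; cases x with
        | none => simp
        | some v => simp [hs v, Finsupp.single_apply]
      rw [hseq, Finsupp.prod_single_index (by simp)]
      simp only [Option.elim]
      rw [Polynomial.algebraMap_eq, Polynomial.coeff_C_mul, Polynomial.coeff_X_pow]
      have : (Finsupp.single (none : Option τ) (s none) = Finsupp.single none a)
          ↔ s none = a := by
        constructor
        · intro h; simpa using DFunLike.congr_fun h none
        · intro h; rw [h]
      by_cases h : s none = a
      · simp [h, this]
      · rw [if_neg (this.not.mpr h), if_neg (fun hh => h hh.symm), mul_zero]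


lemma tAct_monomial {k : Type*} [Field k] {τ : Type*} [DecidableEq τ]
    (m : Option τ →₀ ℕ) (F : MvPolynomial (Option τ) k) :
    tAct (monomial m 1) F = opPow tOp m F := by
  classical
  rw [tAct, apAct, support_monomial, if_neg one_ne_zero, Finset.sum_singleton, coeff_monomial,
    if_pos rfl, one_smul]

lemma tAct_eq_zero {k : Type*} [Field k] [CharZero k] {n : ℕ}
    (H : MvPolynomial (Option (Fin n)) k)
    (c : MvPolynomial (Option (Fin n)) k)
    (hc : ∀ d : MvPolynomial (Option (Fin n)) k,
      (aeval fun v : Option (Fin n) => v.elim Polynomial.X fun _ => 0 :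
        MvPolynomial (Option (Fin n)) k →ₐ[k] Polynomial k)
        (tAct d (tAct c H)) = 0) :
    tAct c H = 0 := by
  by_contra hG
  set G := tAct c H with hGdef
  obtain ⟨μ, hμ⟩ := support_nonempty.mpr hG
  set m' := Finsupp.erase none μ with hm'
  have hm'none : m' none = 0 := Finsupp.erase_same
  have hsum : Finsupp.single none (μ none) + m' = μ := Finsupp.single_add_erase none μ
  have hd := hc (monomial m' 1)
  rw [tAct_monomial] at hd
  have h1 := congrArg (fun q => Polynomial.coeff q (μ none)) hd
  simp only [Polynomial.coeff_zero] at h1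
  rw [coeff_z'] at h1
  rw [opPow] at h1
  rw [coeff_foldr' m' tOp m'.support.toList m'.support.nodup_toList
      (fun i hi => by
        rw [Finset.mem_toList, Finsupp.mem_support_iff] at hi
        cases i with
        | none => exact absurd hm'none hi
        | some v => rfl)
      (Finsupp.single none (μ none))
      (fun i hi => by
        rw [Finset.mem_toList, Finsupp.mem_support_iff] at hi
        cases i with
        | none => exact absurd hm'none hi
        | some v => simp [Finsupp.single_apply])] at h1
  rw [Finset.sum_map_toList] at h1
  have hsing : (m'.support.sum fun i => Finsupp.single i (m' i)) = m' := Finsupp.sum_single m'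
  rw [hsing, hsum] at h1
  have hfac : ((m'.support.toList.map fun i => (m' i).factorial).prod : ℕ) ≠ 0 := by
    refine (List.prod_pos ?_).ne'
    intro x hx
    simp only [List.mem_map] at hx
    obtain ⟨i, _, rfl⟩ := hx
    exact Nat.factorial_pos _
  rcases mul_eq_zero.mp h1 with h | h
  · exact hfac (Nat.cast_eq_zero.mp h)
  · exact (Finsupp.mem_support_iff.mp hμ) h

/-- **Injectivity of the duality map `Φ`.** Let `C = k[t,α]/H^⊥` for `H ∈ k[t,x]`, where
`H^⊥` is the annihilator of `H` for the relative apolarity action (`t = X none` acting by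
multiplication, `α_i = X (some i)` acting as `∂/∂x_i`), and assume `C` is a finite free
`k[t]`-module (`t` acting through the image of `X none`). Then the map
`Φ : C → Hom_{k[t]}(C, k[t])`, `Φ(c)(d) = (ev_{c ∘ H}(d))(x = 0)`, is injective; on
representatives this says: if `(d ∘ (c ∘ H))(x = 0) = 0` for all `d ∈ k[t,α]`, then
`c ∈ H^⊥`. -/
theorem duality_map_injective {k : Type*} [Field k] [CharZero k] {n : ℕ}
    (H : MvPolynomial (Option (Fin n)) k) :
    letI J : Ideal (MvPolynomial (Option (Fin n)) k) :=
      Ideal.span {h : MvPolynomial (Option (Fin n)) k | tAct h H = 0}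
    letI : Algebra (Polynomial k) (MvPolynomial (Option (Fin n)) k ⧸ J) :=
      (Polynomial.aeval (Ideal.Quotient.mk J (X none))).toRingHom.toAlgebra
    letI z : MvPolynomial (Option (Fin n)) k →ₐ[k] Polynomial k :=
      aeval fun v : Option (Fin n) => v.elim Polynomial.X fun _ => 0
    Module.Free (Polynomial k) (MvPolynomial (Option (Fin n)) k ⧸ J) →
    Module.Finite (Polynomial k) (MvPolynomial (Option (Fin n)) k ⧸ J) →
    ∀ c : MvPolynomial (Option (Fin n)) k,
      (∀ d : MvPolynomial (Option (Fin n)) k, z (tAct d (tAct c H)) = 0) → c ∈ J := by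
  intro _ _ c hc
  exact Ideal.subset_span (tAct_eq_zero H c hc)
end
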